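/- arXiv:2104.07499 — 13 statements merged into one kernel-verified Lean document; each statement's English description precedes it below -/
import Mathlib

section
/- For every α ∈ (0,1), the function λ(θ) = θ^α · sin(θ/2 + απ/2) / sin(θ/2) is strictly decreasing on the interval ((1−α)π, π). -/
open Real

lemma cot_ineq (t : ℝ) (ht : 0 < t) (ht2 : t < π/2) :
    π * sin t < π * t * cos t + 2 * t * sin t := by
  set k : ℝ → ℝ := fun x => cos x / sin x - x⁻¹ with hk
  have hderiv : ∀ x ∈ Set.Icc t (π/2), HasDerivAt k (-(sin x*sin x) - cos x*cos x) x → True := fun _ _ _ => trivial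
  have key : ∀ x ∈ Set.Icc t (π/2),
      HasDerivAt k ((-sin x * sin x - cos x * cos x) / sin x ^ 2 - -(x^2)⁻¹) x := by
    intro x hx
    have hx0 : 0 < x := lt_of_lt_of_le ht hx.1
    have hsx : 0 < sin x := sin_pos_of_pos_of_lt_pi hx0 (lt_of_le_of_lt hx.2 (by linarith [pi_pos]))
    exact ((Real.hasDerivAt_cos x).div (Real.hasDerivAt_sin x) hsx.ne').sub (hasDerivAt_inv hx0.ne')
  have hanti : StrictAntiOn k (Set.Icc t (π/2)) := by
    apply strictAntiOn_of_deriv_neg (convex_Icc _ _)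
    · intro x hx
      exact (key x hx).continuousAt.continuousWithinAt
    · intro x hx
      rw [interior_Icc] at hx
      have hx' : x ∈ Set.Icc t (π/2) := ⟨hx.1.le, hx.2.le⟩
      rw [(key x hx').deriv]
      have hx0 : 0 < x := lt_of_lt_of_le ht hx'.1
      have hsx : 0 < sin x := sin_pos_of_pos_of_lt_pi hx0 (by linarith [pi_pos, hx.2])
      have hlt : sin x < x := Real.sin_lt hx0
      have h1 : (-sin x * sin x - cos x * cos x) / sin x ^ 2 = -(sin x ^2)⁻¹ := by
        have : -sin x * sin x - cos x * cos x = -1 := by nlinarith [sin_sq_add_cos_sq x]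
        rw [this]; field_simp
      rw [h1]
      have h2 : (x^2)⁻¹ < (sin x ^2)⁻¹ := by
        apply inv_strictAnti₀ (by positivity) (by nlinarith)
      linarith
  have hmem1 : t ∈ Set.Icc t (π/2) := ⟨le_refl _, ht2.le⟩
  have hmem2 : π/2 ∈ Set.Icc t (π/2) := ⟨ht2.le, le_refl _⟩
  have h := hanti hmem1 hmem2 ht2
  have hk2 : k (π/2) = -(π/2)⁻¹ := by
    simp [hk, Real.cos_pi_div_two, Real.sin_pi_div_two]
  rw [hk2] at h
  -- h : -(π/2)⁻¹ < cos t / sin t - t⁻¹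
  have hsint : 0 < sin t := sin_pos_of_pos_of_lt_pi ht (by linarith [pi_pos])
  have h2 : (t⁻¹ - (π/2)⁻¹) * sin t < cos t := by
    rw [← lt_div_iff₀ hsint]; simp only [hk] at h; linarith
  have h5 : π * t * ((t⁻¹ - (π/2)⁻¹) * sin t) < π * t * cos t :=
    mul_lt_mul_of_pos_left h2 (by positivity)
  have h6 : π * t * ((t⁻¹ - (π/2)⁻¹) * sin t) = π * sin t - 2 * t * sin t := by
    field_simp
  linarith

-- endpoint inequality
lemma stepB (s : ℝ) (hs : 0 < s) (hs2 : s < π/2) :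
    4 * s * cos s < (π - 2*s) * π * sin s := by
  have h := cot_ineq (π/2 - s) (by linarith) (by linarith)
  rw [Real.sin_pi_div_two_sub, Real.cos_pi_div_two_sub] at h
  nlinarith [h]

-- key inequality
lemma KI (s θ : ℝ) (hs : 0 < s) (hs2 : s < π/2)
    (h1 : π - 2*s < θ) (h2 : θ < π) :
    2*s*(cos s - cos (θ+s)) < π * θ * sin s := by
  have hsin : 0 < sin s := sin_pos_of_pos_of_lt_pi hs (by linarith [pi_pos])
  set G : ℝ → ℝ := fun x => π * x * sin s + 2*s * cos (x+s) with hG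
  have key : ∀ x : ℝ, HasDerivAt G (π * 1 * sin s + 2*s * (-sin (x+s) * 1)) x := by
    intro x
    have hA : HasDerivAt (fun x : ℝ => π * x * sin s) (π * 1 * sin s) x :=
      (((hasDerivAt_id x).const_mul π).mul_const (sin s))
    have hin : HasDerivAt (fun x : ℝ => x + s) 1 x := (hasDerivAt_id x).add_const s
    have hB : HasDerivAt (fun x : ℝ => cos (x + s)) (-sin (x+s) * 1) x :=
      by have := (Real.hasDerivAt_cos (x+s)).comp x hin; exact this
    exact hA.add (hB.const_mul (2*s))
  have hmono : StrictMonoOn G (Set.Icc (π - 2*s) π) := by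
    apply strictMonoOn_of_deriv_pos (convex_Icc _ _)
    · intro x hx; exact (key x).continuousAt.continuousWithinAt
    · intro x hx
      rw [interior_Icc] at hx
      rw [(key x).deriv]
      -- need : 0 < π * 1 * sin s + 2*s*(-sin (x+s) * 1)
      have hu : sin (x + s) = sin (π - (x+s)) := (Real.sin_pi_sub _).symm
      have hub : π - (x+s) < s := by linarith [hx.1]
      have hlb : -s < π - (x+s) := by linarith [hx.2]
      have hsin_lt : sin (π - (x+s)) < sin s := by
        rcases le_or_gt (π - (x+s)) 0 with hle | hgt
        · have : sin (π - (x+s)) ≤ 0 :=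
            Real.sin_nonpos_of_nonpos_of_neg_pi_le hle (by linarith [pi_pos])
          linarith
        · exact Real.strictMonoOn_sin ⟨by linarith, by linarith⟩
            ⟨by linarith, by linarith⟩ hub
      rw [hu] at *
      nlinarith [hsin_lt, hsin]
  have hend := hmono ⟨le_refl _, by linarith⟩ ⟨h1.le, h2.le⟩ h1
  have hGa : G (π - 2*s) = π * (π - 2*s) * sin s - 2*s*cos s := by
    have : π - 2*s + s = π - s := by ring
    rw [hG]; simp only [this, Real.cos_pi_sub]; ring
  have hB := stepB s hs hs2
  rw [hGa] at hend
  simp only [hG] at hend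
  nlinarith [hend, hB]

/-- For every `α ∈ (0,1)`, the function `λ(θ) = θ^α · sin(θ/2 + απ/2) / sin(θ/2)`
is strictly decreasing on the interval `((1−α)π, π)`. -/
theorem gl_lambda_strictAntiOn (α : ℝ) (hα : α ∈ Set.Ioo (0:ℝ) 1) :
    StrictAntiOn (fun θ : ℝ => θ ^ α * Real.sin (θ / 2 + α * π / 2) / Real.sin (θ / 2))
      (Set.Ioo ((1 - α) * π) π) := by
  obtain ⟨hα0, hα1⟩ := hα
  have hcpos : 0 < α * π / 2 := by positivity
  have hc2 : α * π / 2 < π / 2 := by nlinarith [pi_pos]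
  set c := α * π / 2 with hc
  have key : ∀ θ ∈ Set.Ioo ((1 - α) * π) π,
      ∃ d, HasDerivAt (fun θ : ℝ => θ ^ α * Real.sin (θ / 2 + c) / Real.sin (θ / 2)) d θ
        ∧ d < 0 := by
    intro θ hθ
    have hθ0 : 0 < θ := lt_trans (by nlinarith [pi_pos]) hθ.1
    have hθπ : θ < π := hθ.2
    have hs2pos : 0 < sin (θ/2) := sin_pos_of_pos_of_lt_pi (by linarith) (by linarith [pi_pos])
    have hA : HasDerivAt (fun x : ℝ => x ^ α) (α * θ ^ (α - 1)) θ :=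
      Real.hasDerivAt_rpow_const (Or.inl hθ0.ne')
    have hin1 : HasDerivAt (fun x : ℝ => x / 2 + c) (1/2) θ := by
      simpa using ((hasDerivAt_id θ).div_const 2).add_const c
    have hB : HasDerivAt (fun x : ℝ => Real.sin (x / 2 + c)) (cos (θ/2 + c) * (1/2)) θ :=
      by have := (Real.hasDerivAt_sin (θ/2 + c)).comp θ hin1; exact this
    have hin2 : HasDerivAt (fun x : ℝ => x / 2) ((1:ℝ)/2) θ := by
      simpa using (hasDerivAt_id θ).div_const 2
    have hC : HasDerivAt (fun x : ℝ => Real.sin (x / 2)) (cos (θ/2) * (1/2)) θ :=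
      by have := (Real.hasDerivAt_sin (θ/2)).comp θ hin2; exact this
    refine ⟨_, (hA.mul hB).div hC hs2pos.ne', ?_⟩
    -- show the derivative value is negative
    apply div_neg_of_neg_of_pos _ (by positivity)
    -- numerator
    have hQ : (0:ℝ) < θ ^ (α - 1) := Real.rpow_pos_of_pos hθ0 _
    have hPQ : θ ^ α = θ ^ (α - 1) * θ := by
      rw [← Real.rpow_add_one hθ0.ne' (α - 1), sub_add_cancel]
    have hid1 : Real.sin c = sin (θ/2 + c) * cos (θ/2) - cos (θ/2 + c) * sin (θ/2) := by
      have := Real.sin_sub (θ/2 + c) (θ/2)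
      rw [show θ/2 + c - θ/2 = c by ring] at this
      exact this
    have hid2 : Real.cos c - Real.cos (θ + c) = 2 * sin (θ/2 + c) * sin (θ/2) := by
      have := Real.cos_sub_cos c (θ + c)
      rw [show (c + (θ + c))/2 = θ/2 + c by ring, show (c - (θ + c))/2 = -(θ/2) by ring,
        Real.sin_neg] at this
      linarith
    have hKI := KI c θ hcpos hc2 (by rw [hc]; have := hθ.1; linarith) hθπ
    have hkey : α * (Real.cos c - Real.cos (θ + c)) < θ * Real.sin c := by
      have h2c : 2 * c = α * π := by rw [hc]; ring
      rw [h2c] at hKI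
      have hπ : π * (α * (Real.cos c - Real.cos (θ + c))) < π * (θ * Real.sin c) := by
        linarith [hKI]
      exact lt_of_mul_lt_mul_left hπ pi_pos.le
    have hnum : (α * θ ^ (α - 1) * Real.sin (θ/2 + c) + θ ^ α * (cos (θ/2 + c) * (1/2)))
          * Real.sin (θ/2) - θ ^ α * Real.sin (θ/2 + c) * (cos (θ/2) * (1/2))
        = θ ^ (α - 1) / 2 * (α * (Real.cos c - Real.cos (θ + c)) - θ * Real.sin c) := by
      rw [hPQ, hid2, hid1]; ring
    simp only [Pi.mul_apply]; rw [hnum]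
    exact mul_neg_of_pos_of_neg (by positivity) (by linarith)
  apply strictAntiOn_of_deriv_neg (convex_Ioo _ _)
  · intro x hx
    obtain ⟨d, hd, _⟩ := key x hx
    exact hd.continuousAt.continuousWithinAt
  · intro x hx
    rw [interior_Ioo] at hx
    obtain ⟨d, hd, hneg⟩ := key x hx
    rwa [hd.deriv]
end

section
/- For every α ∈ (0,1) and every θ ∈ (0, π), one has θ · sin(απ/2) > 2α · sin(θ/2) · sin(θ/2 + απ/2). -/
open Real

/-- For every `α ∈ (0,1)` and every `θ ∈ (0, π)`,
`θ · sin(απ/2) > 2α · sin(θ/2) · sin(θ/2 + απ/2)`. -/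
theorem gl_m_positive (α θ : ℝ) (hα : α ∈ Set.Ioo (0:ℝ) 1) (hθ : θ ∈ Set.Ioo (0:ℝ) π) :
    θ * Real.sin (α * π / 2) > 2 * α * Real.sin (θ / 2) * Real.sin (θ / 2 + α * π / 2) := by
  obtain ⟨hα0, hα1⟩ := hα
  obtain ⟨hθ0, hθπ⟩ := hθ
  have hπ := Real.pi_pos
  -- Jordan: sin(απ/2) ≥ α
  have hJ : α ≤ Real.sin (α * π / 2) := by
    have := Real.mul_le_sin (x := α * π / 2) (by positivity) (by nlinarith)
    have hπ0 : (π : ℝ) ≠ 0 := ne_of_gt hπ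
    calc α = 2 / π * (α * π / 2) := by field_simp
      _ ≤ _ := this
  have hs1 : Real.sin (θ / 2) < θ / 2 := Real.sin_lt (by linarith)
  have hs1pos : 0 < Real.sin (θ / 2) :=
    Real.sin_pos_of_pos_of_lt_pi (by linarith) (by linarith)
  have hs2 : Real.sin (θ / 2 + α * π / 2) ≤ 1 := Real.sin_le_one _
  have hs2pos : 0 < Real.sin (θ / 2 + α * π / 2) :=
    Real.sin_pos_of_pos_of_lt_pi (by positivity) (by nlinarith)
  nlinarith [mul_pos hα0 hs1pos, mul_pos hα0 hs2pos]
end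

section
/- For every α ∈ (0,1), one has sin((1−α)π/2) < ((1−α)π/2)^α; equivalently, 2^α < ((1−α)π)^α / sin((1−α)π/2). -/
open Real

/-- For every `α ∈ (0,1)`, `sin((1−α)π/2) < ((1−α)π/2)^α`; equivalently,
`2^α < ((1−α)π)^α / sin((1−α)π/2)`. -/
theorem gl_line_k1_above (α : ℝ) (hα : α ∈ Set.Ioo (0:ℝ) 1) :
    Real.sin ((1 - α) * π / 2) < ((1 - α) * π / 2) ^ α ∧
      (2:ℝ) ^ α < ((1 - α) * π) ^ α / Real.sin ((1 - α) * π / 2) := by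
  obtain ⟨hα0, hα1⟩ := hα
  set x : ℝ := (1 - α) * π / 2 with hxdef
  have hx0 : 0 < x := by
    apply div_pos (mul_pos (by linarith) Real.pi_pos) (by norm_num)
  have hxpi : x < π := by
    have : (1 - α) * π < 2 * π := by nlinarith [Real.pi_pos]
    rw [hxdef]; linarith
  have hsinpos : 0 < Real.sin x := Real.sin_pos_of_pos_of_lt_pi hx0 hxpi
  have h1 : Real.sin x < x ^ α := by
    rcases le_or_gt x 1 with hx1 | hx1
    · have hs : Real.sin x < x := Real.sin_lt hx0
      have hxx : x ^ (1:ℝ) ≤ x ^ α :=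
        Real.rpow_le_rpow_of_exponent_ge hx0 hx1 (le_of_lt hα1)
      rw [Real.rpow_one] at hxx
      linarith
    · have hs : Real.sin x ≤ 1 := Real.sin_le_one x
      have : (1:ℝ) < x ^ α := Real.one_lt_rpow_iff_of_pos hx0 |>.mpr (Or.inl ⟨hx1, hα0⟩)
      linarith
  refine ⟨h1, ?_⟩
  have h2x : (1 - α) * π = 2 * x := by rw [hxdef]; ring
  rw [h2x, Real.mul_rpow (by norm_num) (le_of_lt hx0), lt_div_iff₀ hsinpos]
  have h2pos : (0:ℝ) < (2:ℝ) ^ α := Real.rpow_pos_of_pos (by norm_num) α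
  nlinarith
end

section
/- For every α ∈ (0,1) and every integer k ≥ 3, one has sin((1−α)π/2) ≥ ((1−α)π/(2k))^α; equivalently, (2k)^α ≥ ((1−α)π)^α / sin((1−α)π/2). -/
open Real

lemma core_sin_bound (β : ℝ) (h0 : 0 < β) (h1 : β < 1) :
    β + (1 - β) * (β * π / 6) ≤ Real.sin (β * π / 2) := by
  have hπ1 : (3.141592 : ℝ) < π := Real.pi_gt_d6
  have hπ2 : π < 3.141593 := Real.pi_lt_d6
  rcases le_or_gt β (1/2) with hc | hc
  · -- small β : use sin x > x - x^3/4
    have ht0 : 0 < β * π / 2 := by positivity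
    have ht1 : β * π / 2 ≤ 1 := by nlinarith
    have hs := Real.sin_gt_sub_cube ht0
    have hπsq : π ^ 2 < 9.8697 := by nlinarith
    have hπ3 : π ^ 3 < 32 := by
      nlinarith [mul_lt_mul_of_pos_left hπsq Real.pi_pos]
    have key : 0 ≤ β * (π / 6 - β * π ^ 3 / 32) := by
      apply mul_nonneg h0.le
      have hb : β * π ^ 3 ≤ (1/2) * 32 :=
        mul_le_mul hc hπ3.le (by positivity) (by norm_num)
      nlinarith
    have key2 : 0 ≤ β * (β * (π / 6 - β * π ^ 3 / 32)) := mul_nonneg h0.le key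
    have hlin : 0 ≤ β * (π / 3 - 1) := mul_nonneg h0.le (by nlinarith)
    nlinarith [key2, hlin]
  · -- large β : use cos bound
    set a := 1 - β with ha
    have ha0 : 0 < a := by simpa [ha] using h1
    have hac : a < 1/2 := by simp [ha]; linarith
    have hrw : β * π / 2 = π / 2 - a * π / 2 := by simp [ha]; ring
    rw [hrw, Real.sin_pi_div_two_sub]
    have hco := Real.one_sub_sq_div_two_le_cos (x := a * π / 2)
    have hβa : β = 1 - a := by simp [ha]
    rw [hβa]
    have hπsq : π ^ 2 < 9.8697 := by nlinarith
    have hcoef : 0 ≤ π ^ 2 / 8 - π / 6 := by nlinarith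
    have inner : 0 ≤ 1 - π / 6 - a * (π ^ 2 / 8 - π / 6) := by
      have := mul_le_mul_of_nonneg_right hac.le hcoef
      nlinarith
    nlinarith [mul_nonneg ha0.le inner, hco]

/-- For every `α ∈ (0,1)` and every integer `k ≥ 3`,
`sin((1−α)π/2) ≥ ((1−α)π/(2k))^α`; equivalently,
`(2k)^α ≥ ((1−α)π)^α / sin((1−α)π/2)`. -/
theorem gl_line_k3_below (α : ℝ) (hα : α ∈ Set.Ioo (0:ℝ) 1) (k : ℕ) (hk : 3 ≤ k) :
    Real.sin ((1 - α) * π / 2) ≥ ((1 - α) * π / (2 * (k:ℝ))) ^ α ∧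
      (2 * (k:ℝ)) ^ α ≥ ((1 - α) * π) ^ α / Real.sin ((1 - α) * π / 2) := by
  obtain ⟨hα0, hα1⟩ := hα
  have hβ0 : 0 < 1 - α := by linarith
  have hπ : 0 < π := Real.pi_pos
  have hk6 : (6:ℝ) ≤ 2 * (k:ℝ) := by
    have : (3:ℝ) ≤ (k:ℝ) := by exact_mod_cast hk
    linarith
  have hkpos : (0:ℝ) < 2 * (k:ℝ) := by linarith
  have hbase : (1 - α) * π / (2 * (k:ℝ)) ≤ (1 - α) * π / 6 := by
    gcongr
  have h1 : ((1 - α) * π / (2 * (k:ℝ))) ^ α ≤ ((1 - α) * π / 6) ^ α := by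
    apply Real.rpow_le_rpow (by positivity) hbase hα0.le
  have h2 : ((1 - α) * π / 6) ^ α ≤ α * ((1 - α) * π / 6) + (1 - α) := by
    have := Real.geom_mean_le_arith_mean2_weighted hα0.le hβ0.le
      (by positivity : (0:ℝ) ≤ (1 - α) * π / 6) zero_le_one (by ring)
    simpa [Real.one_rpow] using this
  have h3 : α * ((1 - α) * π / 6) + (1 - α) ≤ Real.sin ((1 - α) * π / 2) := by
    have := core_sin_bound (1 - α) hβ0 (by linarith)
    have hid : α = 1 - (1 - α) := by ring
    calc α * ((1 - α) * π / 6) + (1 - α)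
        = (1 - α) + (1 - (1 - α)) * ((1 - α) * π / 6) := by ring
      _ ≤ _ := this
  have hfirst : Real.sin ((1 - α) * π / 2) ≥ ((1 - α) * π / (2 * (k:ℝ))) ^ α :=
    le_trans h1 (le_trans h2 h3)
  refine ⟨hfirst, ?_⟩
  have hsin : 0 < Real.sin ((1 - α) * π / 2) := by
    apply Real.sin_pos_of_pos_of_lt_pi
    · positivity
    · nlinarith
  rw [ge_iff_le, div_le_iff₀ hsin]
  have hrpow : ((1 - α) * π / (2 * (k:ℝ))) ^ α
      = ((1 - α) * π) ^ α / (2 * (k:ℝ)) ^ α :=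
    Real.div_rpow (by positivity) hkpos.le α
  have hkα : (0:ℝ) < (2 * (k:ℝ)) ^ α := Real.rpow_pos_of_pos hkpos α
  rw [hrpow] at hfirst
  calc ((1 - α) * π) ^ α = ((1 - α) * π) ^ α / (2 * (k:ℝ)) ^ α * (2 * (k:ℝ)) ^ α := by
        field_simp
    _ ≤ Real.sin ((1 - α) * π / 2) * (2 * (k:ℝ)) ^ α := by
        apply mul_le_mul_of_nonneg_right hfirst hkα.le
    _ = (2 * (k:ℝ)) ^ α * Real.sin ((1 - α) * π / 2) := mul_comm _ _
end

section
/- Let α ∈ (0,1) and let k ≥ 2 be an integer. For an integer m with 0 ≤ m ≤ (k−1)/2 set φ_m = (k − 2m − 1)π/(2(k−α)) and a_m = 2^α k^α cos(φ_m)^α / (2 cos(α φ_m)). Then the values a_m are strictly increasing in m: if 0 ≤ m < m' ≤ (k−1)/2 are integers, then a_m < a_{m'}. -/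
open Real

private lemma gl_aux_cos_pos {x : ℝ} (hx : x ∈ Set.Ico 0 (π/2)) : 0 < Real.cos x :=
  Real.cos_pos_of_mem_Ioo ⟨by nlinarith [Real.pi_pos, hx.1], hx.2⟩

private lemma gl_aux_mem {α x : ℝ} (hα0 : 0 < α) (hα1 : α < 1)
    (hx : x ∈ Set.Ico 0 (π/2)) : α * x ∈ Set.Ico 0 (π/2) := by
  constructor
  · exact mul_nonneg hα0.le hx.1
  · nlinarith [hx.1, hx.2]

private lemma gl_aux_anti (α : ℝ) (hα0 : 0 < α) (hα1 : α < 1) :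
    StrictAntiOn (fun x => α * Real.log (Real.cos x) - Real.log (Real.cos (α * x)))
      (Set.Ico 0 (π/2)) := by
  have hderiv : ∀ x ∈ Set.Ico 0 (π/2), HasDerivAt
      (fun x => α * Real.log (Real.cos x) - Real.log (Real.cos (α * x)))
      (α * ((Real.cos x)⁻¹ * (-Real.sin x)) - (Real.cos (α * x))⁻¹ * (-Real.sin (α * x) * α))
      x := by
    intro x hx
    have hc : 0 < Real.cos x := gl_aux_cos_pos hx
    have hc' : 0 < Real.cos (α * x) := gl_aux_cos_pos (gl_aux_mem hα0 hα1 hx)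
    have h1 : HasDerivAt (fun x => Real.log (Real.cos x)) ((Real.cos x)⁻¹ * (-Real.sin x)) x :=
      (Real.hasDerivAt_log hc.ne').comp x (Real.hasDerivAt_cos x)
    have h2 : HasDerivAt (fun x : ℝ => α * x) α x := by
      simpa using (hasDerivAt_id x).const_mul α
    have h3 : HasDerivAt (fun x => Real.log (Real.cos (α * x)))
        ((Real.cos (α * x))⁻¹ * (-Real.sin (α * x) * α)) x := by
      have := ((Real.hasDerivAt_log hc'.ne').comp (α*x) (Real.hasDerivAt_cos (α*x))).comp x h2
      simpa [Function.comp_def, mul_assoc] using this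
    exact (h1.const_mul α).sub h3
  apply strictAntiOn_of_deriv_neg (convex_Ico 0 (π/2))
  · exact fun x hx => (hderiv x hx).continuousAt.continuousWithinAt
  · intro x hx
    rw [interior_Ico] at hx
    have hx' : x ∈ Set.Ico 0 (π/2) := ⟨hx.1.le, hx.2⟩
    rw [(hderiv x hx').deriv]
    have hc : 0 < Real.cos x := gl_aux_cos_pos hx'
    have hc' : 0 < Real.cos (α * x) := gl_aux_cos_pos (gl_aux_mem hα0 hα1 hx')
    have htan : Real.tan (α * x) < Real.tan x := by
      apply Real.strictMonoOn_tan
      · constructor <;> nlinarith [hx.1, hx.2, Real.pi_pos]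
      · constructor <;> nlinarith [hx.1, hx.2, Real.pi_pos]
      · nlinarith [hx.1]
    rw [Real.tan_eq_sin_div_cos, Real.tan_eq_sin_div_cos] at htan
    have e1 : α * ((Real.cos x)⁻¹ * (-Real.sin x)) - (Real.cos (α * x))⁻¹ * (-Real.sin (α * x) * α)
        = α * (Real.sin (α * x) / Real.cos (α * x) - Real.sin x / Real.cos x) := by
      field_simp; ring
    rw [e1]
    exact mul_neg_of_pos_of_neg hα0 (sub_neg.mpr htan)

/-- For `α ∈ (0,1)`, an integer `k ≥ 2`, and integers `0 ≤ m < m' ≤ (k−1)/2`, the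
intersection heights `a_m = 2^α k^α cos(φ_m)^α / (2 cos(α φ_m))`, with
`φ_m = (k − 2m − 1)π/(2(k−α))`, are strictly increasing in `m`. -/
theorem gl_intersection_points_increasing (α : ℝ) (hα : α ∈ Set.Ioo (0:ℝ) 1)
    (k m m' : ℕ) (hk : 2 ≤ k) (hmm : m < m') (hm' : 2 * m' + 1 ≤ k) :
    2 ^ α * (k:ℝ) ^ α *
        Real.cos (((k:ℝ) - 2 * (m:ℝ) - 1) * π / (2 * ((k:ℝ) - α))) ^ α /
        (2 * Real.cos (α * (((k:ℝ) - 2 * (m:ℝ) - 1) * π / (2 * ((k:ℝ) - α))))) <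
      2 ^ α * (k:ℝ) ^ α *
        Real.cos (((k:ℝ) - 2 * (m':ℝ) - 1) * π / (2 * ((k:ℝ) - α))) ^ α /
        (2 * Real.cos (α * (((k:ℝ) - 2 * (m':ℝ) - 1) * π / (2 * ((k:ℝ) - α))))) := by
  obtain ⟨hα0, hα1⟩ := hα
  have hπ := Real.pi_pos
  set φ : ℕ → ℝ := fun n => ((k:ℝ) - 2 * (n:ℝ) - 1) * π / (2 * ((k:ℝ) - α)) with hφ
  have hk2 : (2:ℝ) ≤ (k:ℝ) := by exact_mod_cast hk
  have hkα : 0 < (k:ℝ) - α := by linarith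
  have hm'k : (2:ℝ) * (m':ℝ) + 1 ≤ (k:ℝ) := by exact_mod_cast hm'
  have hmmr : (m:ℝ) < (m':ℝ) := by exact_mod_cast hmm
  have hφm' : φ m' ∈ Set.Ico 0 (π/2) := by
    constructor
    · apply div_nonneg _ (by positivity)
      apply mul_nonneg _ hπ.le
      linarith
    · rw [div_lt_div_iff₀ (by positivity) (by norm_num)]
      nlinarith [Nat.cast_nonneg (α := ℝ) m']
  have hφm : φ m ∈ Set.Ico 0 (π/2) := by
    constructor
    · apply div_nonneg _ (by positivity)
      apply mul_nonneg _ hπ.le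
      linarith
    · rw [div_lt_div_iff₀ (by positivity) (by norm_num)]
      nlinarith [Nat.cast_nonneg (α := ℝ) m]
  have hlt : φ m' < φ m :=
    div_lt_div_of_pos_right (by nlinarith) (by positivity)
  have hcm : 0 < Real.cos (φ m) := gl_aux_cos_pos hφm
  have hcm' : 0 < Real.cos (φ m') := gl_aux_cos_pos hφm'
  have hcam : 0 < Real.cos (α * φ m) := gl_aux_cos_pos (gl_aux_mem hα0 hα1 hφm)
  have hcam' : 0 < Real.cos (α * φ m') := gl_aux_cos_pos (gl_aux_mem hα0 hα1 hφm')
  have hF := gl_aux_anti α hα0 hα1 hφm' hφm hlt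
  have hexp := Real.exp_lt_exp.2 hF
  rw [Real.exp_sub, Real.exp_sub, Real.exp_log hcam, Real.exp_log hcam'] at hexp
  have hr : ∀ c : ℝ, 0 < c → Real.exp (α * Real.log c) = c ^ α := by
    intro c hc
    rw [Real.rpow_def_of_pos hc, mul_comm]
  rw [hr _ hcm, hr _ hcm'] at hexp
  have hC : (0:ℝ) < 2 ^ α * (k:ℝ) ^ α / 2 := by
    have : (0:ℝ) < (k:ℝ) := by positivity
    positivity
  have hgoal := mul_lt_mul_of_pos_left hexp hC
  calc 2 ^ α * (k:ℝ) ^ α * Real.cos (φ m) ^ α / (2 * Real.cos (α * φ m))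
      = 2 ^ α * (k:ℝ) ^ α / 2 * (Real.cos (φ m) ^ α / Real.cos (α * φ m)) := by ring
    _ < 2 ^ α * (k:ℝ) ^ α / 2 * (Real.cos (φ m') ^ α / Real.cos (α * φ m')) := hgoal
    _ = 2 ^ α * (k:ℝ) ^ α * Real.cos (φ m') ^ α / (2 * Real.cos (α * φ m')) := by ring
end

section
/- Let α ∈ (0,1) and let k ≥ 2 be an integer. The function λ_k(θ) = (2k)^α · sin(θ/(2k))^α · sin(θ/2 + α(π/2 − θ/(2k))) / sin(θ/2) is monotonically decreasing (antitone) on the interval ((1−α)kπ/(k−α), π). -/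
set_option maxHeartbeats 1000000


open Real

/-- Along the curve `Γ_0`, the quantity
`λ_k(θ) = (2k)^α sin(θ/(2k))^α sin(θ/2 + α(π/2 − θ/(2k))) / sin(θ/2)`. -/
noncomputable def lamk (α : ℝ) (k : ℕ) (θ : ℝ) : ℝ :=
  (2 * (k:ℝ)) ^ α * Real.sin (θ / (2 * (k:ℝ))) ^ α *
    Real.sin (θ / 2 + α * (Real.pi / 2 - θ / (2 * (k:ℝ)))) / Real.sin (θ / 2)

/-- Concavity scaling for `sin`: for `t ∈ [0,1]`, `y ∈ [0,π]`, `t·sin y ≤ sin (t·y)`. -/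
lemma sin_concave_bound {t y : ℝ} (ht0 : 0 ≤ t) (ht1 : t ≤ 1) (hy0 : 0 ≤ y) (hyπ : y ≤ π) :
    t * Real.sin y ≤ Real.sin (t * y) := by
  have h := (strictConcaveOn_sin_Icc.concaveOn).2 (Set.mem_Icc.2 ⟨hy0, hyπ⟩)
      (Set.mem_Icc.2 ⟨le_refl (0:ℝ), Real.pi_pos.le⟩) ht0 (sub_nonneg.2 ht1)
      (by ring : t + (1 - t) = 1)
  simpa using h

/-- The key trigonometric inequality controlling the sign of the derivative of `lamk`. -/
lemma key_ineq (α : ℝ) (hα0 : 0 < α) (hα1 : α < 1) (k : ℕ) (hk : 2 ≤ k) (x : ℝ)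
    (hx0 : 0 < x) (hxk : (k:ℝ) * x < π/2) (hw : (1-α) * (π/2) < ((k:ℝ) - α) * x) :
    α * Real.sin ((k:ℝ)*x + α*(π/2 - x)) * Real.sin (((k:ℝ)-1)*x)
      ≤ ((k:ℝ) - α) * Real.sin x * Real.sin (α*(π/2 - x)) := by
  have hπ := Real.pi_pos
  have hk2 : (2:ℝ) ≤ (k:ℝ) := by exact_mod_cast hk
  have hxπ2 : x < π/2 := by nlinarith
  have hβ0 : 0 < π/2 - x := by linarith
  have hαβ0 : 0 < α * (π/2 - x) := mul_pos hα0 hβ0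
  have hαβ2 : α * (π/2 - x) < π/2 := by nlinarith
  have hsx : 0 ≤ Real.sin x := Real.sin_nonneg_of_nonneg_of_le_pi hx0.le (by linarith)
  have hsαβ : 0 ≤ Real.sin (α*(π/2-x)) :=
    Real.sin_nonneg_of_nonneg_of_le_pi hαβ0.le (by linarith)
  have hψlt : (k:ℝ)*x + α*(π/2 - x) < π := by linarith
  have hψgt : π/2 < (k:ℝ)*x + α*(π/2 - x) := by nlinarith
  rcases eq_or_lt_of_le hk2 with hk2e | hk3
  · -- the case k = 2
    rw [← hk2e]
    have h1 : (2:ℝ)*x + α*(π/2 - x) = π - (2-α)*(π/2 - x) := by ring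
    rw [h1, Real.sin_pi_sub, show ((2:ℝ)-1)*x = x by ring]
    have h4 : (0:ℝ) < 2 - α := by linarith
    have h3 : α/(2-α) * Real.sin ((2-α)*(π/2-x)) ≤ Real.sin (α*(π/2-x)) := by
      have hb := sin_concave_bound (t := α/(2-α)) (y := (2-α)*(π/2-x))
        (div_nonneg hα0.le h4.le) (by rw [div_le_one h4]; linarith)
        (by nlinarith) (by nlinarith)
      rwa [show α/(2-α) * ((2-α)*(π/2-x)) = α*(π/2-x) by field_simp] at hb
    rw [div_mul_eq_mul_div, div_le_iff₀ h4] at h3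
    nlinarith [mul_le_mul_of_nonneg_left h3 hsx]
  · -- the case k ≥ 3
    have hk3' : (3:ℝ) ≤ (k:ℝ) := by
      have : 2 < k := by exact_mod_cast hk3
      exact_mod_cast (by omega : 3 ≤ k)
    obtain ⟨u, hu_def⟩ : ∃ u, u = π - ((k:ℝ)*x + α*(π/2 - x)) := ⟨_, rfl⟩
    have hu0 : 0 < u := by rw [hu_def]; linarith
    have hu2 : u < π/2 := by rw [hu_def]; linarith
    have hsψ : Real.sin ((k:ℝ)*x + α*(π/2-x)) = Real.sin u := by
      rw [hu_def]
      exact (Real.sin_pi_sub _).symm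
    rw [hsψ]
    have hsu : 0 ≤ Real.sin u := Real.sin_nonneg_of_nonneg_of_le_pi hu0.le (by linarith)
    have hcx0 : 0 ≤ Real.cos x := Real.cos_nonneg_of_mem_Icc ⟨by linarith, by linarith⟩
    have hcx1 : Real.cos x ≤ 1 := Real.cos_le_one x
    have hk1ne : ((k:ℝ)-1) ≠ 0 := by linarith
    have s1 : Real.sin (((k:ℝ)-1)*x) ≤ ((k:ℝ)-1) * Real.sin x * Real.cos x := by
      have hb := sin_concave_bound (t := 2/((k:ℝ)-1)) (y := ((k:ℝ)-1)*x)
        (div_nonneg (by norm_num) (by linarith))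
        (by rw [div_le_one (by linarith)]; linarith)
        (mul_nonneg (by linarith) hx0.le) (by nlinarith)
      rw [show (2/((k:ℝ)-1)) * (((k:ℝ)-1)*x) = 2*x by field_simp, Real.sin_two_mul] at hb
      rw [div_mul_eq_mul_div, div_le_iff₀ (by linarith : (0:ℝ) < (k:ℝ)-1)] at hb
      nlinarith [hb]
    have hαk : α * ((k:ℝ)-1) ≤ (k:ℝ) - α := by nlinarith
    have hchain := mul_le_mul_of_nonneg_left s1 (mul_nonneg hα0.le hsu)
    rcases le_or_gt u (α*(π/2-x)) with hcase | hcase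
    · -- u ≤ αβ : direct monotonicity
      have hmono : Real.sin u ≤ Real.sin (α*(π/2-x)) :=
        Real.strictMonoOn_sin.monotoneOn ⟨by linarith, by linarith⟩
          ⟨by linarith, by linarith⟩ hcase
      nlinarith [hchain, mul_le_mul_of_nonneg_left hcx1
          (mul_nonneg (mul_nonneg (mul_nonneg hα0.le (by linarith : (0:ℝ) ≤ (k:ℝ)-1)) hsu) hsx),
        mul_le_mul_of_nonneg_left hmono
          (mul_nonneg (mul_nonneg hα0.le (by linarith : (0:ℝ) ≤ (k:ℝ)-1)) hsx),
        mul_le_mul_of_nonneg_right hαk (mul_nonneg hsx hsαβ)]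
    · -- αβ < u : sinc comparison
      have hb := sin_concave_bound (t := α*(π/2-x)/u) (y := u)
        (div_nonneg hαβ0.le hu0.le) (by rw [div_le_one hu0]; linarith)
        hu0.le (by linarith)
      rw [show α*(π/2-x)/u*u = α*(π/2-x) by field_simp [hu0.ne']] at hb
      rw [div_mul_eq_mul_div, div_le_iff₀ hu0] at hb
      -- hb : α*(π/2-x) * sin u ≤ sin (α*(π/2-x)) * u
      have h2 : ((k:ℝ)-1) * u ≤ ((k:ℝ)-α) * (π/2 - x) := by
        have hwpos : 0 ≤ ((k:ℝ)-2) * (((k:ℝ)-α)*x - (1-α)*(π/2)) :=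
          mul_nonneg (by linarith) (by linarith)
        rw [hu_def]
        nlinarith [hwpos]
      have h3 : α * ((k:ℝ)-1) * Real.sin u ≤ ((k:ℝ)-α) * Real.sin (α*(π/2-x)) := by
        have e1 : ((k:ℝ)-1) * (α*(π/2-x) * Real.sin u)
            ≤ ((k:ℝ)-1) * (Real.sin (α*(π/2-x)) * u) :=
          mul_le_mul_of_nonneg_left hb (by linarith)
        have e2 : Real.sin (α*(π/2-x)) * (((k:ℝ)-1) * u)
            ≤ Real.sin (α*(π/2-x)) * (((k:ℝ)-α) * (π/2 - x)) :=
          mul_le_mul_of_nonneg_left h2 hsαβ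
        have e3 : (π/2 - x) * (α*((k:ℝ)-1)*Real.sin u)
            ≤ (π/2 - x) * (((k:ℝ)-α)*Real.sin (α*(π/2-x))) := by nlinarith [e1, e2]
        exact le_of_mul_le_mul_left e3 hβ0
      nlinarith [hchain, mul_le_mul_of_nonneg_left hcx1
          (mul_nonneg (mul_nonneg (mul_nonneg hα0.le (by linarith : (0:ℝ) ≤ (k:ℝ)-1)) hsu) hsx),
        mul_le_mul_of_nonneg_right h3 hsx]

/-- For `α ∈ (0,1)` and integer `k ≥ 2`, `λ_k` is monotonically decreasing on
`((1−α)kπ/(k−α), π)`. -/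
theorem lamk_antitoneOn (α : ℝ) (hα : α ∈ Set.Ioo (0:ℝ) 1) (k : ℕ) (hk : 2 ≤ k) :
    AntitoneOn (lamk α k) (Set.Ioo ((1 - α) * (k:ℝ) * π / ((k:ℝ) - α)) π) := by
  obtain ⟨hα0, hα1⟩ := hα
  have hπ := Real.pi_pos
  have hk2 : (2:ℝ) ≤ (k:ℝ) := by exact_mod_cast hk
  have hkα : (0:ℝ) < (k:ℝ) - α := by linarith
  have hkpos : (0:ℝ) < 2*(k:ℝ) := by linarith
  have hθ₀pos : 0 < (1 - α) * (k:ℝ) * π / ((k:ℝ) - α) :=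
    div_pos (mul_pos (mul_pos (by linarith : (0:ℝ) < 1 - α)
      (by linarith : (0:ℝ) < (k:ℝ))) hπ) hkα
  have key' : ∀ θ ∈ Set.Ioo ((1 - α) * (k:ℝ) * π / ((k:ℝ) - α)) π,
      ∃ d, d ≤ 0 ∧ HasDerivAt (lamk α k) d θ := by
    intro θ hθ
    obtain ⟨hθl, hθπ⟩ := hθ
    have hθpos : 0 < θ := lt_trans hθ₀pos hθl
    have hs1 : 0 < Real.sin (θ/(2*(k:ℝ))) := by
      apply Real.sin_pos_of_pos_of_lt_pi (by positivity)
      rw [div_lt_iff₀ hkpos]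
      nlinarith [mul_nonneg hπ.le (by linarith : (0:ℝ) ≤ 2*(k:ℝ) - 1)]
    have hs2 : 0 < Real.sin (θ/2) :=
      Real.sin_pos_of_pos_of_lt_pi (by positivity) (by linarith)
    -- derivative construction
    have hd1 : HasDerivAt (fun t : ℝ => t/(2*(k:ℝ))) (1/(2*(k:ℝ))) θ :=
      (hasDerivAt_id θ).div_const _
    have hd2 : HasDerivAt (fun t : ℝ => Real.sin (t/(2*(k:ℝ))))
        (Real.cos (θ/(2*(k:ℝ))) * (1/(2*(k:ℝ)))) θ :=
      (Real.hasDerivAt_sin _).comp θ hd1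
    have hd3 : HasDerivAt (fun t : ℝ => Real.sin (t/(2*(k:ℝ))) ^ α)
        (Real.cos (θ/(2*(k:ℝ))) * (1/(2*(k:ℝ))) * α * Real.sin (θ/(2*(k:ℝ))) ^ (α-1)) θ :=
      hd2.rpow_const (Or.inl hs1.ne')
    have hd3c : HasDerivAt (fun t : ℝ => (2*(k:ℝ))^α * Real.sin (t/(2*(k:ℝ))) ^ α)
        ((2*(k:ℝ))^α * (Real.cos (θ/(2*(k:ℝ))) * (1/(2*(k:ℝ))) * α
          * Real.sin (θ/(2*(k:ℝ))) ^ (α-1))) θ :=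
      HasDerivAt.const_mul _ hd3
    have hd4 : HasDerivAt (fun t : ℝ => t/2 + α*(π/2 - t/(2*(k:ℝ))))
        (1/2 + α*(0 - 1/(2*(k:ℝ)))) θ :=
      ((hasDerivAt_id θ).div_const 2).add
        (HasDerivAt.const_mul α ((hasDerivAt_const θ (π/2)).sub hd1))
    have hd5 : HasDerivAt (fun t : ℝ => Real.sin (t/2 + α*(π/2 - t/(2*(k:ℝ)))))
        (Real.cos (θ/2 + α*(π/2 - θ/(2*(k:ℝ)))) * (1/2 + α*(0 - 1/(2*(k:ℝ))))) θ :=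
      (Real.hasDerivAt_sin _).comp θ hd4
    have hd6 := hd3c.mul hd5
    have hd7 : HasDerivAt (fun t : ℝ => Real.sin (t/2)) (Real.cos (θ/2) * (1/2)) θ :=
      (Real.hasDerivAt_sin _).comp θ ((hasDerivAt_id θ).div_const 2)
    have hd8 : HasDerivAt (lamk α k)
        ((((2*(k:ℝ))^α * (Real.cos (θ/(2*(k:ℝ))) * (1/(2*(k:ℝ))) * α
              * Real.sin (θ/(2*(k:ℝ))) ^ (α-1))
            * Real.sin (θ/2 + α*(π/2 - θ/(2*(k:ℝ))))
          + (2*(k:ℝ))^α * Real.sin (θ/(2*(k:ℝ))) ^ α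
            * (Real.cos (θ/2 + α*(π/2 - θ/(2*(k:ℝ)))) * (1/2 + α*(0 - 1/(2*(k:ℝ))))))
            * Real.sin (θ/2)
          - (2*(k:ℝ))^α * Real.sin (θ/(2*(k:ℝ))) ^ α
              * Real.sin (θ/2 + α*(π/2 - θ/(2*(k:ℝ)))) * (Real.cos (θ/2) * (1/2)))
          / Real.sin (θ/2) ^ 2) θ := hd6.div hd7 hs2.ne'
    refine ⟨_, ?_, hd8⟩
    -- the sign of the derivative
    have e1 : (k:ℝ) * (θ/(2*(k:ℝ))) = θ/2 := by field_simp
    have e2 : ((k:ℝ)-1) * (θ/(2*(k:ℝ))) = θ/2 - θ/(2*(k:ℝ)) := by field_simp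
    have hwx : (1-α) * (π/2) < ((k:ℝ) - α) * (θ/(2*(k:ℝ))) := by
      rw [div_lt_iff₀ hkα] at hθl
      rw [show ((k:ℝ)-α) * (θ/(2*(k:ℝ))) = ((k:ℝ)-α)*θ/(2*(k:ℝ)) by ring,
        lt_div_iff₀ hkpos]
      nlinarith [hθl]
    have hkey := key_ineq α hα0 hα1 k hk (θ/(2*(k:ℝ))) (by positivity)
      (by rw [e1]; linarith) hwx
    rw [e1, e2] at hkey
    have hsub1 : Real.sin (α*(π/2 - θ/(2*(k:ℝ))))
        = Real.sin (θ/2 + α*(π/2 - θ/(2*(k:ℝ)))) * Real.cos (θ/2)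
          - Real.cos (θ/2 + α*(π/2 - θ/(2*(k:ℝ)))) * Real.sin (θ/2) := by
      rw [← Real.sin_sub]; congr 1; ring
    have hsub2 : Real.sin (θ/2 - θ/(2*(k:ℝ)))
        = Real.sin (θ/2) * Real.cos (θ/(2*(k:ℝ)))
          - Real.cos (θ/2) * Real.sin (θ/(2*(k:ℝ))) := Real.sin_sub _ _
    have hexpr : α * Real.cos (θ/(2*(k:ℝ))) * Real.sin (θ/2 + α*(π/2 - θ/(2*(k:ℝ))))
          * Real.sin (θ/2)
        + ((k:ℝ)-α) * Real.sin (θ/(2*(k:ℝ))) * Real.cos (θ/2 + α*(π/2 - θ/(2*(k:ℝ))))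
          * Real.sin (θ/2)
        - (k:ℝ) * Real.sin (θ/(2*(k:ℝ))) * Real.sin (θ/2 + α*(π/2 - θ/(2*(k:ℝ))))
          * Real.cos (θ/2) ≤ 0 := by
      rw [hsub1, hsub2] at hkey
      nlinarith [hkey]
    have h6 : (((2*(k:ℝ))^α * (Real.cos (θ/(2*(k:ℝ))) * (1/(2*(k:ℝ))) * α
              * Real.sin (θ/(2*(k:ℝ))) ^ (α-1))
            * Real.sin (θ/2 + α*(π/2 - θ/(2*(k:ℝ))))
          + (2*(k:ℝ))^α * Real.sin (θ/(2*(k:ℝ))) ^ α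
            * (Real.cos (θ/2 + α*(π/2 - θ/(2*(k:ℝ)))) * (1/2 + α*(0 - 1/(2*(k:ℝ))))))
            * Real.sin (θ/2)
          - (2*(k:ℝ))^α * Real.sin (θ/(2*(k:ℝ))) ^ α
              * Real.sin (θ/2 + α*(π/2 - θ/(2*(k:ℝ)))) * (Real.cos (θ/2) * (1/2)))
        = (2*(k:ℝ))^α * Real.sin (θ/(2*(k:ℝ))) ^ α / (2*(k:ℝ) * Real.sin (θ/(2*(k:ℝ))))
          * (α * Real.cos (θ/(2*(k:ℝ))) * Real.sin (θ/2 + α*(π/2 - θ/(2*(k:ℝ))))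
              * Real.sin (θ/2)
            + ((k:ℝ)-α) * Real.sin (θ/(2*(k:ℝ))) * Real.cos (θ/2 + α*(π/2 - θ/(2*(k:ℝ))))
              * Real.sin (θ/2)
            - (k:ℝ) * Real.sin (θ/(2*(k:ℝ))) * Real.sin (θ/2 + α*(π/2 - θ/(2*(k:ℝ))))
              * Real.cos (θ/2)) := by
      rw [Real.rpow_sub hs1, Real.rpow_one]
      field_simp
      ring
    rw [div_nonpos_iff]
    refine Or.inr ⟨?_, sq_nonneg _⟩
    rw [h6]
    exact mul_nonpos_iff.mpr (Or.inl ⟨div_nonneg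
      (mul_nonneg (Real.rpow_nonneg (by positivity) α) (Real.rpow_nonneg hs1.le α))
      (mul_nonneg hkpos.le hs1.le), hexpr⟩)
  apply antitoneOn_of_deriv_nonpos (convex_Ioo _ _)
  · intro θ hθ
    obtain ⟨d, _, hd⟩ := key' θ hθ
    exact hd.continuousAt.continuousWithinAt
  · rw [interior_Ioo]
    intro θ hθ
    obtain ⟨d, _, hd⟩ := key' θ hθ
    exact hd.differentiableAt.differentiableWithinAt
  · intro θ hθ
    rw [interior_Ioo] at hθ
    obtain ⟨d, hd0, hd⟩ := key' θ hθ
    rw [hd.deriv]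
    exact hd0
end

section
/- Let α ∈ (0,1) and let k ≥ 2 be an integer. For every θ ∈ ((1−α)kπ/(k−α), π), one has λ_k(θ) := (2k)^α · sin(θ/(2k))^α · sin(θ/2 + α(π/2 − θ/(2k))) / sin(θ/2) < (2k)^α. Geometrically, the straight line a − b = (2k)^α lies strictly below the curve Γ_0. -/
open Real

/-- For `α ∈ (0,1)`, integer `k ≥ 2` and every `θ ∈ ((1−α)kπ/(k−α), π)`, one has
`λ_k(θ) < (2k)^α`: the straight line `a − b = (2k)^α` lies strictly below `Γ_0`. -/
theorem lamk_lt_line (α : ℝ) (hα : α ∈ Set.Ioo (0:ℝ) 1) (k : ℕ) (hk : 2 ≤ k)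
    (θ : ℝ) (hθ : θ ∈ Set.Ioo ((1 - α) * (k:ℝ) * π / ((k:ℝ) - α)) π) :
    lamk α k θ < (2 * (k:ℝ)) ^ α := by
  obtain ⟨hα0, hα1⟩ := hα
  obtain ⟨hθ1, hθ2⟩ := hθ
  have hk2 : (2:ℝ) ≤ (k:ℝ) := by exact_mod_cast hk
  have hkpos : (0:ℝ) < (k:ℝ) := by linarith
  have hka : (0:ℝ) < (k:ℝ) - α := by linarith
  have h2k : (0:ℝ) < 2 * (k:ℝ) := by linarith
  have hπ := Real.pi_pos
  -- θ > 0
  have hθpos : 0 < θ := by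
    have : 0 < (1 - α) * (k:ℝ) * π / ((k:ℝ) - α) :=
      div_pos (mul_pos (mul_pos (by linarith) hkpos) hπ) hka
    linarith
  set x : ℝ := θ / (2 * (k:ℝ)) with hxdef
  set v : ℝ := θ / 2 with hvdef
  have hx0 : 0 < x := by positivity
  have hxv : x < v := by
    rw [hxdef, hvdef, div_lt_div_iff₀ h2k (by norm_num)]
    nlinarith
  have hvlt : v < π / 2 := by rw [hvdef]; linarith
  have hxlt : x < π / 2 := lt_trans hxv hvlt
  have hden : (0:ℝ) < π / 2 - x := by linarith
  set lam0 : ℝ := (π / 2 - v) / (π / 2 - x) with hlam0def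
  have hl0 : 0 ≤ lam0 := by
    rw [hlam0def]; exact div_nonneg (by linarith) hden.le
  have hl1 : lam0 < 1 := by
    rw [hlam0def, div_lt_one hden]; linarith
  -- the hypothesis θ > (1-α)kπ/(k-α) means lam0 < α
  have h1 : (1 - α) * (k:ℝ) * π < θ * ((k:ℝ) - α) := (div_lt_iff₀ hka).mp hθ1
  have key : π / 2 - v < α * (π / 2 - x) := by
    have e : α * (π / 2 - x) - (π / 2 - v) =
        (θ * ((k:ℝ) - α) - (1 - α) * (k:ℝ) * π) / (2 * (k:ℝ)) := by
      rw [hxdef, hvdef]; field_simp; ring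
    have hnum : 0 < (θ * ((k:ℝ) - α) - (1 - α) * (k:ℝ) * π) / (2 * (k:ℝ)) :=
      div_pos (by linarith) h2k
    linarith
  have hlamα : lam0 < α := by
    rw [hlam0def, div_lt_iff₀ hden]; linarith
  -- basic sine facts
  have hsx0 : 0 < Real.sin x := Real.sin_pos_of_pos_of_lt_pi hx0 (by linarith)
  have hsx1 : Real.sin x < 1 := by
    have := Real.strictMonoOn_sin (Set.mem_Icc.mpr ⟨by linarith, hxlt.le⟩)
      (Set.mem_Icc.mpr ⟨by linarith, le_refl (π/2)⟩) hxlt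
    simpa using this
  have hsv0 : 0 < Real.sin v := Real.sin_pos_of_pos_of_lt_pi (by positivity) (by linarith)
  -- Claim A : sin(x)^lam0 ≤ sin v
  have hcancel : lam0 * (π / 2 - x) = π / 2 - v := by
    rw [hlam0def]; exact div_mul_cancel₀ _ (ne_of_gt hden)
  have hvc : lam0 • x + (1 - lam0) • (π / 2) = v := by
    simp only [smul_eq_mul]
    linear_combination -hcancel
  have hmem1 : x ∈ Set.Icc (0:ℝ) π := Set.mem_Icc.mpr ⟨hx0.le, by linarith⟩
  have hmem2 : π / 2 ∈ Set.Icc (0:ℝ) π := Set.mem_Icc.mpr ⟨by linarith, by linarith⟩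
  have hb0 : (0:ℝ) ≤ 1 - lam0 := by linarith
  have hab : lam0 + (1 - lam0) = 1 := by ring
  have hconc : lam0 • Real.sin x + (1 - lam0) • Real.sin (π / 2) ≤
      Real.sin (lam0 • x + (1 - lam0) • (π / 2)) :=
    strictConcaveOn_sin_Icc.concaveOn.2 hmem1 hmem2 hl0 hb0 hab
  rw [hvc] at hconc
  have hgm : Real.sin x ^ lam0 * 1 ^ (1 - lam0) ≤ lam0 * Real.sin x + (1 - lam0) * 1 :=
    Real.geom_mean_le_arith_mean2_weighted hl0 (by linarith) hsx0.le zero_le_one (by ring)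
  have claimA : Real.sin x ^ lam0 ≤ Real.sin v := by
    have h1' : Real.sin x ^ lam0 ≤ lam0 * Real.sin x + (1 - lam0) * 1 := by
      simpa using hgm
    have h2' : lam0 * Real.sin x + (1 - lam0) * 1 ≤ Real.sin v := by
      simpa [smul_eq_mul, Real.sin_pi_div_two] using hconc
    linarith
  -- main estimate : sin(x)^α * sin(arg) < sin v
  have hsplit : Real.sin x ^ α = Real.sin x ^ lam0 * Real.sin x ^ (α - lam0) := by
    rw [← Real.rpow_add hsx0]; ring_nf
  have hlt1 : Real.sin x ^ (α - lam0) < 1 :=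
    Real.rpow_lt_one hsx0.le hsx1 (by linarith)
  have hpowlt : Real.sin x ^ α < Real.sin v := by
    calc Real.sin x ^ α = Real.sin x ^ lam0 * Real.sin x ^ (α - lam0) := hsplit
      _ < Real.sin x ^ lam0 * 1 := by
          apply mul_lt_mul_of_pos_left hlt1 (Real.rpow_pos_of_pos hsx0 lam0)
      _ = Real.sin x ^ lam0 := mul_one _
      _ ≤ Real.sin v := claimA
  have hxαpos : 0 < Real.sin x ^ α := Real.rpow_pos_of_pos hsx0 α
  have hmain : Real.sin x ^ α * Real.sin (v + α * (π / 2 - x)) < Real.sin v := by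
    calc Real.sin x ^ α * Real.sin (v + α * (π / 2 - x))
        ≤ Real.sin x ^ α * 1 :=
          mul_le_mul_of_nonneg_left (Real.sin_le_one _) hxαpos.le
      _ = Real.sin x ^ α := mul_one _
      _ < Real.sin v := hpowlt
  -- conclude
  have h2kα : (0:ℝ) < (2 * (k:ℝ)) ^ α := Real.rpow_pos_of_pos h2k α
  rw [lamk, div_lt_iff₀ hsv0]
  calc (2 * (k:ℝ)) ^ α * Real.sin (θ / (2 * (k:ℝ))) ^ α *
        Real.sin (θ / 2 + α * (π / 2 - θ / (2 * (k:ℝ))))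
      = (2 * (k:ℝ)) ^ α * (Real.sin x ^ α * Real.sin (v + α * (π / 2 - x))) := by
        rw [hxdef, hvdef]; ring
    _ < (2 * (k:ℝ)) ^ α * Real.sin v := mul_lt_mul_of_pos_left hmain h2kα
    _ = (2 * (k:ℝ)) ^ α * Real.sin (θ / 2) := by rw [hvdef]
end

section
/- Let α ∈ (0,1), let k ≥ 2 and m ≥ 1 be integers, and define λ_k(θ) = (2k)^α · sin(θ/(2k))^α · sin(θ/2 + α(π/2 − θ/(2k))) / sin(θ/2). If β ∈ [(1−α)kπ/(k−α), π) and β + 2mπ ∈ [(2m+1−α)kπ/(k−α), (2m+1)π), then λ_k(β + 2mπ) > λ_k(β). -/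
open Real

set_option maxHeartbeats 1000000 in
/-- For `α ∈ (0,1)`, integers `k ≥ 2`, `m ≥ 1`, if `β ∈ [(1−α)kπ/(k−α), π)` and
`β + 2mπ ∈ [(2m+1−α)kπ/(k−α), (2m+1)π)`, then `λ_k(β + 2mπ) > λ_k(β)`. -/
theorem lamk_shift_gt (α : ℝ) (hα : α ∈ Set.Ioo (0:ℝ) 1) (k m : ℕ) (hk : 2 ≤ k)
    (hm : 1 ≤ m) (β : ℝ)
    (hβ : β ∈ Set.Ico ((1 - α) * (k:ℝ) * π / ((k:ℝ) - α)) π)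
    (hβm : β + 2 * (m:ℝ) * π ∈
      Set.Ico ((2 * (m:ℝ) + 1 - α) * (k:ℝ) * π / ((k:ℝ) - α)) ((2 * (m:ℝ) + 1) * π)) :
    lamk α k (β + 2 * (m:ℝ) * π) > lamk α k β := by
  obtain ⟨hα0, hα1⟩ := hα
  have hπ := Real.pi_pos
  have hK2 : (2:ℝ) ≤ (k:ℝ) := by exact_mod_cast hk
  have hm1 : (1:ℝ) ≤ (m:ℝ) := by exact_mod_cast hm
  have hKα : 0 < (k:ℝ) - α := by linarith
  have hKpos : (0:ℝ) < (k:ℝ) := by linarith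
  -- the hypothesis forces k > 2m+1
  have hkm : 2 * (m:ℝ) + 1 < (k:ℝ) := by
    have h1 : (2 * (m:ℝ) + 1 - α) * (k:ℝ) * π / ((k:ℝ) - α) < (2 * (m:ℝ) + 1) * π :=
      lt_of_le_of_lt hβm.1 hβm.2
    rw [div_lt_iff₀ hKα] at h1
    nlinarith [mul_pos hα0 hπ]
  -- β > 0
  have hβpos : 0 < β := by
    have h2 : 0 < (1 - α) * (k:ℝ) * π / ((k:ℝ) - α) := by
      apply div_pos _ hKα
      exact mul_pos (mul_pos (by linarith) hKpos) hπ
    linarith [hβ.1]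
  have hβlt : β < π := hβ.2
  have hθ₂lt : β + 2 * (m:ℝ) * π < (2 * (m:ℝ) + 1) * π := hβm.2
  have hθ₂ltK : β + 2 * (m:ℝ) * π < (k:ℝ) * π := by nlinarith
  have hβθ₂ : β < β + 2 * (m:ℝ) * π := by nlinarith
  -- bounds on the small angles
  have hb2K : 0 < β / (2 * (k:ℝ)) := by positivity
  have ht2K : (β + 2 * (m:ℝ) * π) / (2 * (k:ℝ)) < π / 2 := by
    rw [div_lt_iff₀ (by positivity)]
    nlinarith
  have hbt2K : β / (2 * (k:ℝ)) < (β + 2 * (m:ℝ) * π) / (2 * (k:ℝ)) :=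
    (div_lt_div_iff_of_pos_right (by positivity)).mpr hβθ₂
  -- monotonicity of sin on the small angles
  have hsinlt : Real.sin (β / (2 * (k:ℝ))) < Real.sin ((β + 2 * (m:ℝ) * π) / (2 * (k:ℝ))) := by
    apply Real.strictMonoOn_sin ⟨by linarith, by linarith⟩ ⟨by linarith, by linarith⟩ hbt2K
  have hsinβK : 0 < Real.sin (β / (2 * (k:ℝ))) :=
    Real.sin_pos_of_pos_of_lt_pi hb2K (by linarith)
  -- the shifted sine arguments
  obtain ⟨ψ₁, hψ₁⟩ : ∃ x : ℝ, x = β / 2 + α * (π / 2 - β / (2 * (k:ℝ))) := ⟨_, rfl⟩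
  obtain ⟨ψ₂, hψ₂⟩ : ∃ x : ℝ, x = β / 2 + α * (π / 2 - (β + 2 * (m:ℝ) * π) / (2 * (k:ℝ))) := ⟨_, rfl⟩
  have hψ₂₁ : ψ₂ < ψ₁ := by
    rw [hψ₁, hψ₂]
    have := mul_lt_mul_of_pos_left hbt2K hα0
    nlinarith
  have hψ₁π : ψ₁ < π := by
    rw [hψ₁]
    nlinarith [mul_pos hα0 hb2K]
  have hψ₂half : π / 2 ≤ ψ₂ := by
    have h := hβm.1
    rw [div_le_iff₀ hKα] at h
    have hkey : 2 * (k:ℝ) * ψ₂ = (k:ℝ) * β + α * (k:ℝ) * π - α * β - 2 * (m:ℝ) * α * π := by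
      rw [hψ₂]; field_simp; ring
    have h2 : 2 * (k:ℝ) * (π / 2) ≤ 2 * (k:ℝ) * ψ₂ := by rw [hkey]; nlinarith
    exact le_of_mul_le_mul_left h2 (by positivity)
  -- compare the shifted sines
  have hSlt : Real.sin ψ₁ < Real.sin ψ₂ := by
    have h1 : Real.sin (π - ψ₁) < Real.sin (π - ψ₂) := by
      apply Real.strictMonoOn_sin ⟨by linarith, by linarith⟩ ⟨by linarith, by linarith⟩
        (by linarith)
    rwa [Real.sin_pi_sub, Real.sin_pi_sub] at h1
  have hS₁pos : 0 < Real.sin ψ₁ :=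
    Real.sin_pos_of_pos_of_lt_pi (by linarith) hψ₁π
  -- positivity of the remaining factors
  have hspos : 0 < Real.sin (β / 2) :=
    Real.sin_pos_of_pos_of_lt_pi (by linarith) (by linarith)
  have hCpos : 0 < (2 * (k:ℝ)) ^ α := Real.rpow_pos_of_pos (by positivity) α
  have hA : Real.sin (β / (2 * (k:ℝ))) ^ α < Real.sin ((β + 2 * (m:ℝ) * π) / (2 * (k:ℝ))) ^ α :=
    Real.rpow_lt_rpow hsinβK.le hsinlt hα0
  have hA₂pos : 0 < Real.sin ((β + 2 * (m:ℝ) * π) / (2 * (k:ℝ))) ^ α :=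
    Real.rpow_pos_of_pos (by linarith) α
  -- rewrite lamk at the shifted point
  have hne : ((-1:ℝ)) ^ m ≠ 0 := pow_ne_zero m (by norm_num)
  have heq : lamk α k (β + 2 * (m:ℝ) * π) =
      (2 * (k:ℝ)) ^ α * Real.sin ((β + 2 * (m:ℝ) * π) / (2 * (k:ℝ))) ^ α *
        Real.sin ψ₂ / Real.sin (β / 2) := by
    unfold lamk
    rw [show (β + 2 * (m:ℝ) * π) / 2 + α * (π / 2 - (β + 2 * (m:ℝ) * π) / (2 * (k:ℝ)))
          = ψ₂ + (m:ℝ) * π from by rw [hψ₂]; ring,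
        show (β + 2 * (m:ℝ) * π) / 2 = β / 2 + (m:ℝ) * π from by ring,
        Real.sin_add_nat_mul_pi, Real.sin_add_nat_mul_pi]
    field_simp
  have heq₁ : lamk α k β =
      (2 * (k:ℝ)) ^ α * Real.sin (β / (2 * (k:ℝ))) ^ α * Real.sin ψ₁ / Real.sin (β / 2) := by
    unfold lamk
    rw [hψ₁]
  rw [heq, heq₁, gt_iff_lt, div_lt_div_iff_of_pos_right hspos]
  calc (2 * (k:ℝ)) ^ α * Real.sin (β / (2 * (k:ℝ))) ^ α * Real.sin ψ₁
      = (2 * (k:ℝ)) ^ α * (Real.sin (β / (2 * (k:ℝ))) ^ α * Real.sin ψ₁) := by ring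
    _ < (2 * (k:ℝ)) ^ α * (Real.sin ((β + 2 * (m:ℝ) * π) / (2 * (k:ℝ))) ^ α * Real.sin ψ₂) := by
        apply mul_lt_mul_of_pos_left _ hCpos
        exact mul_lt_mul hA hSlt.le hS₁pos hA₂pos.le
    _ = (2 * (k:ℝ)) ^ α * Real.sin ((β + 2 * (m:ℝ) * π) / (2 * (k:ℝ))) ^ α * Real.sin ψ₂ := by
        ring
end

section
/- Let α ∈ (0,1) and let k ≥ 2 be an integer. Define for β ∈ ((1−α)π/(1−α/k), π) and t ∈ (0, π/2) the point γ(t; β) = ( (2k)^α sin(t)^α sin(β + απ/2 − αt)/sin(β), −(2k)^α sin(t)^α sin(απ/2 − αt)/sin(β) ) ∈ ℝ². If β₁ ≠ β₂ are both in ((1−α)π/(1−α/k), π) and t₁, t₂ ∈ (0, π/2) satisfy γ(t₁; β₁) = γ(t₂; β₂) = (a, b), then |a| + b ≥ 0. In other words, the curves γ(·; β₁) and γ(·; β₂) do not intersect in the region {(a,b) : |a| + b < 0}. -/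
set_option maxHeartbeats 2000000


open Real

lemma aux_deriv (α c : ℝ) (hα0 : 0 < α) (hα1 : α < 1) (hc : |c| < 1)
    (x : ℝ) (hx0 : 0 < x) (hx : x < α * π / 2) :
    HasDerivAt (fun y : ℝ => α * Real.log (Real.cos (y / α)) -
      Real.log (c * Real.cos y + Real.sqrt (1 - c ^ 2 * Real.sin y ^ 2)))
      (c * Real.sin x / Real.sqrt (1 - c ^ 2 * Real.sin x ^ 2) -
        Real.sin (x / α) / Real.cos (x / α)) x ∧
    (c * Real.sin x / Real.sqrt (1 - c ^ 2 * Real.sin x ^ 2) -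
        Real.sin (x / α) / Real.cos (x / α)) < 0 := by
  have hπ := Real.pi_pos
  have hc2 : c ^ 2 < 1 := by
    rcases abs_lt.mp hc with ⟨h1, h2⟩; nlinarith
  have hxpi2 : x < π / 2 := by nlinarith
  have hxα : x / α < π / 2 := by
    rw [div_lt_iff₀ hα0]; nlinarith
  have hxα0 : 0 < x / α := div_pos hx0 hα0
  have hcosα : 0 < Real.cos (x / α) :=
    Real.cos_pos_of_mem_Ioo ⟨by linarith, hxα⟩
  have hsin : 0 < Real.sin x := Real.sin_pos_of_pos_of_lt_pi hx0 (by linarith)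
  have hcos : 0 < Real.cos x := Real.cos_pos_of_mem_Ioo ⟨by linarith, hxpi2⟩
  have hsc := Real.sin_sq_add_cos_sq x
  have hu : 0 < 1 - c ^ 2 * Real.sin x ^ 2 := by nlinarith [sq_nonneg (Real.sin x), sq_nonneg (Real.cos x)]
  set E := Real.sqrt (1 - c ^ 2 * Real.sin x ^ 2) with hE
  have hEpos : 0 < E := Real.sqrt_pos.mpr hu
  have hE2 : E ^ 2 = 1 - c ^ 2 * Real.sin x ^ 2 := Real.sq_sqrt hu.le
  have hcE : c * Real.cos x < E := by nlinarith
  have hPpos : 0 < c * Real.cos x + E := by nlinarith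
  constructor
  · have d1 : HasDerivAt (fun y : ℝ => y / α) (1 / α) x := (hasDerivAt_id x).div_const α
    have d2 : HasDerivAt (fun y : ℝ => Real.cos (y / α)) (-Real.sin (x / α) * (1 / α)) x :=
      by have := (Real.hasDerivAt_cos (x / α)).comp x d1; exact this
    have d3 := d2.log hcosα.ne'
    have d4 := d3.const_mul α
    have d5 : HasDerivAt (fun y : ℝ => Real.sin y ^ 2) (2 * Real.sin x ^ 1 * Real.cos x) x :=
      (Real.hasDerivAt_sin x).pow 2
    have d6 : HasDerivAt (fun y : ℝ => 1 - c ^ 2 * Real.sin y ^ 2)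
        (-(c ^ 2 * (2 * Real.sin x ^ 1 * Real.cos x))) x := (d5.const_mul (c ^ 2)).const_sub 1
    have d7 := d6.sqrt hu.ne'
    have d8 : HasDerivAt (fun y : ℝ => c * Real.cos y) (c * -Real.sin x) x :=
      (Real.hasDerivAt_cos x).const_mul c
    have d9 := (d8.add d7).log hPpos.ne'
    have d11 := d4.sub d9
    refine HasDerivAt.congr_deriv d11 ?_
    simp only [Pi.add_apply]
    rw [← hE]
    field_simp
    ring
  · have t1 : c * Real.sin x / E < Real.sin x / Real.cos x := by
      rw [div_lt_div_iff₀ hEpos hcos]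
      nlinarith
    have t2 : Real.sin x / Real.cos x < Real.sin (x / α) / Real.cos (x / α) := by
      rw [← Real.tan_eq_sin_div_cos, ← Real.tan_eq_sin_div_cos]
      refine Real.tan_lt_tan_of_nonneg_of_lt_pi_div_two hx0.le hxα ?_
      rw [lt_div_iff₀ hα0]; nlinarith
    linarith

lemma key_mono (α c s R : ℝ) (hα0 : 0 < α) (hα1 : α < 1) (hc : |c| < 1)
    (hs : 0 < s) (hR : 0 < R) (θ₁ θ₂ : ℝ)
    (h1 : 0 < θ₁) (h12 : θ₁ < θ₂) (h2 : θ₂ < α * π / 2)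
    (e₁ : R * Real.cos (θ₁ / α) ^ α =
      s * (c * Real.cos θ₁ + Real.sqrt (1 - c ^ 2 * Real.sin θ₁ ^ 2)))
    (e₂ : R * Real.cos (θ₂ / α) ^ α =
      s * (c * Real.cos θ₂ + Real.sqrt (1 - c ^ 2 * Real.sin θ₂ ^ 2))) : False := by
  have hπ := Real.pi_pos
  have hc2 : c ^ 2 < 1 := by rcases abs_lt.mp hc with ⟨u1, u2⟩; nlinarith
  set g : ℝ → ℝ := fun y => α * Real.log (Real.cos (y / α)) -
      Real.log (c * Real.cos y + Real.sqrt (1 - c ^ 2 * Real.sin y ^ 2)) with hg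
  -- facts valid on Icc θ₁ θ₂
  have hmem : ∀ x ∈ Set.Icc θ₁ θ₂, 0 < x ∧ x < α * π / 2 := by
    rintro x ⟨hl, hr⟩; exact ⟨lt_of_lt_of_le h1 hl, lt_of_le_of_lt hr h2⟩
  have hanti : StrictAntiOn g (Set.Icc θ₁ θ₂) := by
    refine strictAntiOn_of_deriv_neg (convex_Icc _ _) ?_ ?_
    · intro x hx
      obtain ⟨hx0, hxlt⟩ := hmem x hx
      exact ((aux_deriv α c hα0 hα1 hc x hx0 hxlt).1).continuousAt.continuousWithinAt
    · intro x hx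
      rw [interior_Icc] at hx
      obtain ⟨hx0, hxlt⟩ := hmem x ⟨hx.1.le, hx.2.le⟩
      obtain ⟨hd, hneg⟩ := aux_deriv α c hα0 hα1 hc x hx0 hxlt
      rw [hd.deriv]; exact hneg
  -- compute g θᵢ
  have hval : ∀ θ, 0 < θ → θ < α * π / 2 →
      R * Real.cos (θ / α) ^ α =
        s * (c * Real.cos θ + Real.sqrt (1 - c ^ 2 * Real.sin θ ^ 2)) →
      g θ = Real.log s - Real.log R := by
    intro θ hθ0 hθlt he
    have hθα : θ / α < π / 2 := by rw [div_lt_iff₀ hα0]; nlinarith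
    have hcosα : 0 < Real.cos (θ / α) :=
      Real.cos_pos_of_mem_Ioo ⟨by linarith [div_pos hθ0 hα0], hθα⟩
    have hsin : 0 < Real.sin θ := Real.sin_pos_of_pos_of_lt_pi hθ0 (by nlinarith)
    have hsc := Real.sin_sq_add_cos_sq θ
    have hu : 0 < 1 - c ^ 2 * Real.sin θ ^ 2 := by
      nlinarith [sq_nonneg (Real.sin θ), sq_nonneg (Real.cos θ)]
    have hEpos : 0 < Real.sqrt (1 - c ^ 2 * Real.sin θ ^ 2) := Real.sqrt_pos.mpr hu
    have hE2 : Real.sqrt (1 - c ^ 2 * Real.sin θ ^ 2) ^ 2 = 1 - c ^ 2 * Real.sin θ ^ 2 :=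
      Real.sq_sqrt hu.le
    have hPpos : 0 < c * Real.cos θ + Real.sqrt (1 - c ^ 2 * Real.sin θ ^ 2) := by
      nlinarith
    have hrp : 0 < Real.cos (θ / α) ^ α := Real.rpow_pos_of_pos hcosα α
    have := congrArg Real.log he
    rw [Real.log_mul hR.ne' hrp.ne', Real.log_mul hs.ne' hPpos.ne',
      Real.log_rpow hcosα] at this
    simp only [hg]
    linarith
  have g1 := hval θ₁ h1 (by linarith) e₁
  have g2 := hval θ₂ (by linarith) h2 e₂
  have := hanti (Set.left_mem_Icc.mpr h12.le) (Set.right_mem_Icc.mpr h12.le) h12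
  rw [g1, g2] at this
  exact lt_irrefl _ this

set_option maxHeartbeats 1000000 in
lemma reduce (α R : ℝ) (hα0 : 0 < α) (hα1 : α < 1) (hR : 0 < R) (β t a b : ℝ)
    (hβ0 : 0 < β) (hβπ : β < π) (ht0 : 0 < t) (htπ : t < π / 2)
    (hb : b < 0) (hab : |a| < -b)
    (ha : R * Real.sin t ^ α * Real.sin (β + α * π / 2 - α * t) / Real.sin β = a)
    (hbe : -(R * Real.sin t ^ α * Real.sin (α * π / 2 - α * t) / Real.sin β) = b) :
    R * Real.cos ((α * π / 2 - α * t) / α) ^ α =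
      (-b) * ((a / (-b)) * Real.cos (α * π / 2 - α * t) +
        Real.sqrt (1 - (a / (-b)) ^ 2 * Real.sin (α * π / 2 - α * t) ^ 2)) ∧
    Real.cos β = -(Real.sqrt (1 - (a / (-b)) ^ 2 * Real.sin (α * π / 2 - α * t) ^ 2)
        * Real.cos (α * π / 2 - α * t)) + (a / (-b)) * Real.sin (α * π / 2 - α * t) ^ 2 := by
  have hπ := Real.pi_pos
  obtain ⟨s, hsdef⟩ : ∃ x : ℝ, x = -b := ⟨_, rfl⟩
  obtain ⟨θ, hθdef⟩ : ∃ x : ℝ, x = α * π / 2 - α * t := ⟨_, rfl⟩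
  obtain ⟨c, hcdef⟩ : ∃ x : ℝ, x = a / s := ⟨_, rfl⟩
  rw [← hθdef] at hbe ⊢
  rw [← hsdef]
  rw [← hcdef]
  have hs : 0 < s := by rw [hsdef]; linarith
  have hab' : |a| < s := by rw [hsdef]; exact hab
  have hcabs : |c| < 1 := by
    rw [hcdef, abs_div, abs_of_pos hs, div_lt_one hs]; exact hab'
  have hc2 : c ^ 2 < 1 := by rcases abs_lt.mp hcabs with ⟨u1, u2⟩; nlinarith
  have hθ0 : 0 < θ := by rw [hθdef]; nlinarith
  have hθlt : θ < α * π / 2 := by rw [hθdef]; nlinarith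
  have hθpi2 : θ < π / 2 := by nlinarith
  have hsθ : 0 < Real.sin θ := Real.sin_pos_of_pos_of_lt_pi hθ0 (by linarith)
  have hcθ : 0 < Real.cos θ := Real.cos_pos_of_mem_Ioo ⟨by linarith, hθpi2⟩
  have hsβ : 0 < Real.sin β := Real.sin_pos_of_pos_of_lt_pi hβ0 hβπ
  have hst : 0 < Real.sin t := Real.sin_pos_of_pos_of_lt_pi ht0 (by linarith)
  -- basic equations
  have hB : R * Real.sin t ^ α * Real.sin θ = s * Real.sin β := by
    have h := hbe
    rw [neg_eq_iff_eq_neg, div_eq_iff hsβ.ne'] at h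
    rw [h, ← hsdef]
  have harg : β + α * π / 2 - α * t = β + θ := by rw [hθdef]; ring
  have hA : R * Real.sin t ^ α * Real.sin (β + θ) = a * Real.sin β := by
    rw [harg] at ha
    rw [← ha]; field_simp
  have hS : s * Real.sin (β + θ) = a * Real.sin θ :=
    mul_left_cancel₀ hsβ.ne'
      (by linear_combination Real.sin θ * hA - Real.sin (β + θ) * hB)
  have hsinβθ : Real.sin (β + θ) = c * Real.sin θ := by
    rw [hcdef, div_mul_eq_mul_div, eq_div_iff hs.ne']; linarith [hS]
  -- the sqrt
  have hsc := Real.sin_sq_add_cos_sq θ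
  have hu : 0 < 1 - c ^ 2 * Real.sin θ ^ 2 := by
    nlinarith [sq_nonneg (Real.sin θ), sq_nonneg (Real.cos θ)]
  obtain ⟨E, hEdef⟩ : ∃ x : ℝ, x = Real.sqrt (1 - c ^ 2 * Real.sin θ ^ 2) := ⟨_, rfl⟩
  rw [← hEdef]
  have hEpos : 0 < E := by rw [hEdef]; exact Real.sqrt_pos.mpr hu
  have hE2 : E ^ 2 = 1 - c ^ 2 * Real.sin θ ^ 2 := by rw [hEdef]; exact Real.sq_sqrt hu.le
  clear ha hbe hab hab' hA hS
  have hcE : c * Real.cos θ < E := by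
    by_contra hcon
    push_neg at hcon
    nlinarith [hE2, hsc, hc2, hEpos]
  have hcos2 : Real.cos (β + θ) ^ 2 = E ^ 2 := by
    have h := Real.sin_sq_add_cos_sq (β + θ)
    have hsq : Real.sin (β + θ) ^ 2 = c ^ 2 * Real.sin θ ^ 2 := by rw [hsinβθ]; ring
    linarith
  have habs : |Real.cos (β + θ)| = |E| := by
    rw [← Real.sqrt_sq_eq_abs, ← Real.sqrt_sq_eq_abs, hcos2]
  have hsinβeq := Real.sin_sub (β + θ) θ
  rw [show β + θ - θ = β from by ring] at hsinβeq
  have hcosE : Real.cos (β + θ) = -E := by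
    rcases abs_eq_abs.mp habs with h | h
    · exfalso
      rw [h, hsinβθ] at hsinβeq
      nlinarith
    · exact h
  have hsinβP : Real.sin β = Real.sin θ * (c * Real.cos θ + E) := by
    rw [hsinβeq, hsinβθ, hcosE]; ring
  constructor
  · -- main equation
    have hmain : R * Real.sin t ^ α = s * (c * Real.cos θ + E) :=
      mul_right_cancel₀ hsθ.ne' (by rw [hB, hsinβP]; ring)
    have hta : θ / α = π / 2 - t := by rw [hθdef]; field_simp
    rw [hta, Real.cos_pi_div_two_sub]
    exact hmain
  · -- cos β
    have hcosβeq := Real.cos_sub (β + θ) θ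
    rw [show β + θ - θ = β from by ring] at hcosβeq
    rw [hcosβeq, hcosE, hsinβθ]; ring

/-- For `α ∈ (0,1)` and integer `k ≥ 2`, the curves
`γ(t; β) = ((2k)^α sin(t)^α sin(β + απ/2 − αt)/sin(β), −(2k)^α sin(t)^α sin(απ/2 − αt)/sin(β))`
for distinct `β₁ ≠ β₂` in `((1−α)π/(1−α/k), π)` do not intersect in the region
`{(a,b) : |a| + b < 0}`. -/
theorem gamma_curves_no_intersection (α : ℝ) (hα : α ∈ Set.Ioo (0:ℝ) 1)
    (k : ℕ) (hk : 2 ≤ k) (β₁ β₂ t₁ t₂ a b : ℝ)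
    (hβ₁ : β₁ ∈ Set.Ioo ((1 - α) * π / (1 - α / (k:ℝ))) π)
    (hβ₂ : β₂ ∈ Set.Ioo ((1 - α) * π / (1 - α / (k:ℝ))) π)
    (hne : β₁ ≠ β₂)
    (ht₁ : t₁ ∈ Set.Ioo (0:ℝ) (π / 2)) (ht₂ : t₂ ∈ Set.Ioo (0:ℝ) (π / 2))
    (ha₁ : (2 * (k:ℝ)) ^ α * Real.sin t₁ ^ α * Real.sin (β₁ + α * π / 2 - α * t₁) /
      Real.sin β₁ = a)
    (hb₁ : -((2 * (k:ℝ)) ^ α * Real.sin t₁ ^ α * Real.sin (α * π / 2 - α * t₁) /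
      Real.sin β₁) = b)
    (ha₂ : (2 * (k:ℝ)) ^ α * Real.sin t₂ ^ α * Real.sin (β₂ + α * π / 2 - α * t₂) /
      Real.sin β₂ = a)
    (hb₂ : -((2 * (k:ℝ)) ^ α * Real.sin t₂ ^ α * Real.sin (α * π / 2 - α * t₂) /
      Real.sin β₂) = b) :
    0 ≤ |a| + b := by
  obtain ⟨hα0, hα1⟩ := hα
  have hπ := Real.pi_pos
  have hk2 : (2:ℝ) ≤ (k:ℝ) := by exact_mod_cast hk
  have h2k : (0:ℝ) < 2 * (k:ℝ) := by linarith
  have hR : 0 < (2 * (k:ℝ)) ^ α := Real.rpow_pos_of_pos h2k α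
  have hαk : α / (k:ℝ) < 1 := by
    rw [div_lt_one (by linarith)]; linarith
  have hL : 0 < (1 - α) * π / (1 - α / (k:ℝ)) := by
    apply div_pos (by nlinarith) (by linarith)
  have hβ₁0 : 0 < β₁ := lt_trans hL hβ₁.1
  have hβ₂0 : 0 < β₂ := lt_trans hL hβ₂.1
  by_contra hcon
  push_neg at hcon
  have hb : b < 0 := by have := abs_nonneg a; linarith
  have hab : |a| < -b := by linarith
  have habs : |a / (-b)| < 1 := by
    rw [abs_div, abs_of_pos (by linarith : (0:ℝ) < -b), div_lt_one (by linarith)]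
    exact hab
  have hsb : (0:ℝ) < -b := by linarith
  have r₁ := reduce α ((2 * (k:ℝ)) ^ α) hα0 hα1 hR β₁ t₁ a b hβ₁0 hβ₁.2 ht₁.1 ht₁.2 hb hab
    ha₁ hb₁
  have r₂ := reduce α ((2 * (k:ℝ)) ^ α) hα0 hα1 hR β₂ t₂ a b hβ₂0 hβ₂.2 ht₂.1 ht₂.2 hb hab
    ha₂ hb₂
  have hθ₁0 : 0 < α * π / 2 - α * t₁ := by nlinarith [ht₁.2]
  have hθ₂0 : 0 < α * π / 2 - α * t₂ := by nlinarith [ht₂.2]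
  have hθ₁lt : α * π / 2 - α * t₁ < α * π / 2 := by nlinarith [ht₁.1]
  have hθ₂lt : α * π / 2 - α * t₂ < α * π / 2 := by nlinarith [ht₂.1]
  rcases lt_trichotomy (α * π / 2 - α * t₁) (α * π / 2 - α * t₂) with h | h | h
  · exact key_mono α (a / (-b)) (-b) ((2 * (k:ℝ)) ^ α) hα0 hα1 habs hsb hR _ _
      hθ₁0 h hθ₂lt r₁.1 r₂.1
  · have hcb : Real.cos β₁ = Real.cos β₂ := by
      rw [r₁.2, r₂.2, h]
    exact hne (Real.injOn_cos ⟨hβ₁0.le, hβ₁.2.le⟩ ⟨hβ₂0.le, hβ₂.2.le⟩ hcb)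
  · exact key_mono α (a / (-b)) (-b) ((2 * (k:ℝ)) ^ α) hα0 hα1 habs hsb hR _ _
      hθ₂0 h hθ₁lt r₂.1 r₁.1
end

section
/- Let α ∈ (0,1), let k ≥ 2 be an integer, and set φ₁ = π(k−1)/(2(k−α)). Then 2^{α−1} k^α cos(φ₁)^α / cos(αφ₁) < ((1−α)π)^α · sin(απ/2) / sin(απ). Geometrically, the vertex (a^{(k)}, −a^{(k)}) of the numerical stability region, where a^{(k)} = 2^{α−1} k^α cos(φ₁)^α / cos(αφ₁), lies strictly above (has smaller first coordinate than) the vertex of the continuous stability region S_*. -/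
open Real

private
lemma quad_key (s : ℝ) (h0 : 0 ≤ s) (h2 : s ≤ π/2) :
    (π - 2*s) * Real.sin s ≤ s * (π - s) * Real.cos s := by
  set R : ℝ → ℝ := fun x => x * (π - x) * Real.cos x - (π - 2*x) * Real.sin x with hR
  have hderiv : ∀ x : ℝ, HasDerivAt R (Real.sin x * (x^2 - π*x + 2)) x := by
    intro x
    have h1 : HasDerivAt (fun x : ℝ => x * (π - x) * Real.cos x)
        ((π - 2*x) * Real.cos x - x * (π - x) * Real.sin x) x := by
      have ha : HasDerivAt (fun x : ℝ => x * (π - x)) (π - 2*x) x := by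
        have := (hasDerivAt_id x).mul ((hasDerivAt_id x).const_sub π)
        convert this using 1 <;> (try rfl) <;> simp [id] <;> try ring
      have := ha.mul (Real.hasDerivAt_cos x)
      convert this using 1 <;> (try rfl) <;> simp [id] <;> try ring
    have h2' : HasDerivAt (fun x : ℝ => (π - 2*x) * Real.sin x)
        ((-2) * Real.sin x + (π - 2*x) * Real.cos x) x := by
      have hb : HasDerivAt (fun x : ℝ => π - 2*x) (-2) x := by
        have := ((hasDerivAt_id x).const_mul (2:ℝ)).const_sub π
        convert this using 1 <;> (try rfl) <;> simp [id] <;> try ring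
      exact hb.mul (Real.hasDerivAt_sin x)
    have := h1.sub h2'
    convert this using 1 <;> (try rfl) <;> simp [id] <;> try ring
  have hdiff : Differentiable ℝ R := fun x => (hderiv x).differentiableAt
  set c : ℝ := (π - Real.sqrt (π^2 - 8))/2 with hc
  have hpi8 : (0:ℝ) ≤ π^2 - 8 := by nlinarith [Real.pi_gt_three]
  have hsq : Real.sqrt (π^2 - 8) ^ 2 = π^2 - 8 := Real.sq_sqrt hpi8
  have hsqle : Real.sqrt (π^2 - 8) ≤ π := by
    nlinarith [Real.sqrt_nonneg (π^2 - 8), Real.pi_pos]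
  have hsqnn : 0 ≤ Real.sqrt (π^2 - 8) := Real.sqrt_nonneg _
  have hc0 : 0 ≤ c := by rw [hc]; linarith
  have hcpi : c ≤ π/2 := by rw [hc]; linarith
  -- quadratic sign facts
  have hquad1 : ∀ x : ℝ, 0 ≤ x → x ≤ c → 0 ≤ x^2 - π*x + 2 := by
    intro x hx hxc
    have key : x^2 - π*x + 2 = (c - x) * ((π + Real.sqrt (π^2-8))/2 - x) := by
      rw [hc]; nlinarith [hsq]
    rw [key]
    have : x ≤ (π + Real.sqrt (π^2-8))/2 := by rw [hc] at hxc; linarith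
    nlinarith
  have hquad2 : ∀ x : ℝ, c ≤ x → x ≤ π/2 → x^2 - π*x + 2 ≤ 0 := by
    intro x hcx hx2
    have key : x^2 - π*x + 2 = (c - x) * ((π + Real.sqrt (π^2-8))/2 - x) := by
      rw [hc]; nlinarith [hsq]
    rw [key]
    have h1 : c - x ≤ 0 := by linarith
    have h2' : 0 ≤ (π + Real.sqrt (π^2-8))/2 - x := by linarith
    nlinarith
  have hmono : MonotoneOn R (Set.Icc 0 c) := by
    apply monotoneOn_of_deriv_nonneg (convex_Icc 0 c) hdiff.continuous.continuousOn
      (hdiff.differentiableOn)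
    intro x hx
    rw [interior_Icc] at hx
    rw [(hderiv x).deriv]
    have hs : 0 ≤ Real.sin x := Real.sin_nonneg_of_nonneg_of_le_pi (le_of_lt hx.1)
      (by linarith [hx.2, hcpi, Real.pi_pos])
    exact mul_nonneg hs (hquad1 x hx.1.le hx.2.le)
  have hanti : AntitoneOn R (Set.Icc c (π/2)) := by
    apply antitoneOn_of_deriv_nonpos (convex_Icc c (π/2)) hdiff.continuous.continuousOn
      (hdiff.differentiableOn)
    intro x hx
    rw [interior_Icc] at hx
    rw [(hderiv x).deriv]
    have hs : 0 ≤ Real.sin x := Real.sin_nonneg_of_nonneg_of_le_pi (by linarith [hx.1, hc0])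
      (by linarith [hx.2, Real.pi_pos])
    exact mul_nonpos_of_nonneg_of_nonpos hs (hquad2 x hx.1.le hx.2.le)
  have hR0 : R 0 = 0 := by simp [hR]
  have hRpi2 : R (π/2) = 0 := by
    simp [hR, Real.cos_pi_div_two, Real.sin_pi_div_two]; ring
  have : 0 ≤ R s := by
    rcases le_or_gt s c with h | h
    · have := hmono (Set.mem_Icc.mpr ⟨le_refl 0, hc0⟩) (Set.mem_Icc.mpr ⟨h0, h⟩) h0
      rw [hR0] at this; exact this
    · have := hanti (Set.mem_Icc.mpr ⟨h.le, h2⟩) (Set.mem_Icc.mpr ⟨hcpi, le_refl _⟩) h2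
      rw [hRpi2] at this; exact this
  simp only [hR] at this; linarith

set_option maxHeartbeats 1000000 in
/-- For `α ∈ (0,1)` and integer `k ≥ 2`, with `φ₁ = π(k−1)/(2(k−α))`, the vertex
`a^{(k)} = 2^{α−1} k^α cos(φ₁)^α / cos(αφ₁)` of the numerical stability region
satisfies `a^{(k)} < ((1−α)π)^α sin(απ/2)/sin(απ)`. -/
theorem gl_vertex_below_continuous_vertex (α : ℝ) (hα : α ∈ Set.Ioo (0:ℝ) 1)
    (k : ℕ) (hk : 2 ≤ k) :
    2 ^ (α - 1) * (k:ℝ) ^ α *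
        Real.cos (π * ((k:ℝ) - 1) / (2 * ((k:ℝ) - α))) ^ α /
        Real.cos (α * (π * ((k:ℝ) - 1) / (2 * ((k:ℝ) - α)))) <
      ((1 - α) * π) ^ α * Real.sin (α * π / 2) / Real.sin (α * π) := by
  obtain ⟨hα0, hα1⟩ := hα
  have hπ := Real.pi_pos
  set K : ℝ := (k : ℝ) with hKdef
  have hK2 : (2:ℝ) ≤ K := by rw [hKdef]; exact_mod_cast hk
  set β : ℝ := 1 - α with hβdef
  have hβ0 : 0 < β := by simp [hβdef]; linarith
  have hβ1 : β < 1 := by simp [hβdef]; linarith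
  have hKα : (1:ℝ) < K - α := by linarith
  have hKα0 : (0:ℝ) < K - α := by linarith
  set c1 : ℝ := π * β / 2 with hc1def
  set c2 : ℝ := α * π / 2 with hc2def
  have hc1pos : 0 < c1 := by positivity
  have hc2pos : 0 < c2 := by positivity
  have hc2lt : c2 < π / 2 := by
    rw [hc2def]; rw [div_lt_div_iff₀ (by norm_num) (by norm_num)]; nlinarith
  have hWpos : 0 < Real.cos c2 := Real.cos_pos_of_mem_Ioo ⟨by linarith, hc2lt⟩
  set t0 : ℝ := π * β / (2 * (K - α)) with ht0def
  have ht0pos : 0 < t0 := by positivity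
  -- bound: c1 + α * t ≤ π β/(2-α) < π/2 for t ≤ t0
  have hubound : ∀ t : ℝ, 0 < t → t ≤ t0 → 0 < c1 + α * t ∧ c1 + α * t < π / 2 ∧
      α * (π - (c1 + α*t)) ≤ π - 2 * (c1 + α*t) := by
    intro t ht htle
    have h1 : 0 < c1 + α * t := by positivity
    have ht0le : t0 ≤ π * β / (2 * (2 - α)) := by
      apply div_le_div_of_nonneg_left (by positivity) (by linarith) (by linarith)
    have h5 : t ≤ π * β / (2 * (2 - α)) := htle.trans ht0le
    have h5' : t * (2 * (2 - α)) ≤ π * β := by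
      rw [← le_div_iff₀ (by nlinarith : (0:ℝ) < 2 * (2 - α))]; exact h5
    have hu2 : (2 - α) * (c1 + α * t) ≤ β * π := by
      rw [hc1def]
      nlinarith [mul_le_mul_of_nonneg_left h5' (by positivity : (0:ℝ) ≤ α/2)]
    refine ⟨h1, by nlinarith [hu2], by nlinarith [hu2]⟩
  -- the function M
  set M : ℝ → ℝ := fun t => α * (Real.log (c1 + α*t) + Real.log (Real.sin t) - Real.log t)
      - Real.log (Real.cos (c2 - α*t)) with hMdef
  have ht0lt : t0 < π/2 := by
    obtain ⟨_, h2, _⟩ := hubound t0 ht0pos le_rfl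
    nlinarith [hc1pos]
  -- derivative facts for t in (0, t0]
  have hDeriv : ∀ t : ℝ, 0 < t → t ≤ t0 →
      HasDerivAt M (α * (α/(c1+α*t) + Real.cos t/Real.sin t - t⁻¹)
        - (α * Real.sin (c2 - α*t))/Real.cos (c2 - α*t)) t := by
    intro t ht htle
    obtain ⟨hu1, hu2, _⟩ := hubound t ht htle
    have htpi : t < π := by linarith [ht0lt, hπ]
    have hsinpos : 0 < Real.sin t := Real.sin_pos_of_pos_of_lt_pi ht htpi
    have hcosid : c2 - α*t = π/2 - (c1 + α*t) := by
      rw [hc1def, hc2def, hβdef]; ring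
    have hcospos : 0 < Real.cos (c2 - α*t) := by
      rw [hcosid, Real.cos_pi_div_two_sub]
      exact Real.sin_pos_of_pos_of_lt_pi hu1 (by linarith)
    have h1 : HasDerivAt (fun t : ℝ => Real.log (c1 + α*t)) (α/(c1+α*t)) t := by
      have hb : HasDerivAt (fun t : ℝ => c1 + α*t) α t := by
        simpa using ((hasDerivAt_id t).const_mul α).const_add c1
      exact hb.log (ne_of_gt hu1)
    have h2 : HasDerivAt (fun t : ℝ => Real.log (Real.sin t)) (Real.cos t/Real.sin t) t :=
      (Real.hasDerivAt_sin t).log (ne_of_gt hsinpos)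
    have h3 : HasDerivAt Real.log t⁻¹ t := Real.hasDerivAt_log (ne_of_gt ht)
    have h4 : HasDerivAt (fun t : ℝ => Real.log (Real.cos (c2 - α*t)))
        ((α * Real.sin (c2 - α*t))/Real.cos (c2 - α*t)) t := by
      have hb : HasDerivAt (fun t : ℝ => c2 - α*t) (-α) t := by
        simpa using ((hasDerivAt_id t).const_mul α).const_sub c2
      have hcos : HasDerivAt (fun t : ℝ => Real.cos (c2 - α*t))
          (α * Real.sin (c2 - α*t)) t := by
        have := hb.cos
        convert this using 1 <;> ring
      have := hcos.log (ne_of_gt hcospos)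
      convert this using 1 <;> ring
    exact (((h1.add h2).sub h3).const_mul α).sub h4
  -- derivative negative on (0, t0)
  have hDneg : ∀ t : ℝ, 0 < t → t ≤ t0 →
      α * (α/(c1+α*t) + Real.cos t/Real.sin t - t⁻¹)
        - (α * Real.sin (c2 - α*t))/Real.cos (c2 - α*t) < 0 := by
    intro t ht htle
    obtain ⟨hu1, hu2, hu3⟩ := hubound t ht htle
    have htpi2 : t < π/2 := lt_of_le_of_lt htle ht0lt
    have hsinpos : 0 < Real.sin t := Real.sin_pos_of_pos_of_lt_pi ht (by linarith)
    have hsinu : 0 < Real.sin (c1 + α*t) := Real.sin_pos_of_pos_of_lt_pi hu1 (by linarith)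
    have hcosid : c2 - α*t = π/2 - (c1 + α*t) := by
      rw [hc1def, hc2def, hβdef]; ring
    rw [hcosid, Real.cos_pi_div_two_sub, Real.sin_pi_div_two_sub]
    set u : ℝ := c1 + α*t with hudef
    -- cot t < 1/t
    have hcot : Real.cos t / Real.sin t < t⁻¹ := by
      have htan := Real.lt_tan ht htpi2
      have hcost : 0 < Real.cos t := Real.cos_pos_of_mem_Ioo ⟨by linarith, htpi2⟩
      rw [Real.tan_eq_sin_div_cos, lt_div_iff₀ hcost] at htan
      rw [div_lt_iff₀ hsinpos, inv_mul_eq_div, lt_div_iff₀ ht]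
      nlinarith
    -- α / u ≤ cos u / sin u
    have hmain : α / u ≤ Real.cos u / Real.sin u := by
      have hq := quad_key u hu1.le hu2.le
      have hπu : 0 < π - u := by linarith
      have h6 : α * (π - u) * Real.sin u ≤ (π - 2*u) * Real.sin u := by
        nlinarith [mul_le_mul_of_nonneg_right hu3 hsinu.le]
      have h7 : α * (π - u) * Real.sin u ≤ u * (π - u) * Real.cos u := h6.trans hq
      have h8 : α * Real.sin u ≤ u * Real.cos u := by nlinarith [h7, hπu]
      rw [div_le_div_iff₀ hu1 hsinu]
      nlinarith [h8]
    have hlt : α/u + Real.cos t/Real.sin t - t⁻¹ < Real.cos u / Real.sin u := by linarith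
    have hml := mul_lt_mul_of_pos_left hlt hα0
    have heq : α * Real.cos u / Real.sin u = α * (Real.cos u / Real.sin u) := mul_div_assoc α _ _
    rw [heq]
    linarith
  have hanti : StrictAntiOn M (Set.Ioc 0 t0) := by
    apply strictAntiOn_of_deriv_neg (convex_Ioc 0 t0)
    · intro t ht
      exact ((hDeriv t ht.1 ht.2).differentiableAt).continuousAt.continuousWithinAt
    · intro t ht
      rw [interior_Ioc] at ht
      rw [(hDeriv t ht.1 ht.2.le).deriv]
      exact hDneg t ht.1 ht.2.le
  have hlim : Filter.Tendsto M (nhdsWithin 0 (Set.Ioi 0))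
      (nhds (α * Real.log c1 - Real.log (Real.cos c2))) := by
    have T1 : Filter.Tendsto (fun t : ℝ => Real.log (c1 + α*t)) (nhdsWithin 0 (Set.Ioi 0))
        (nhds (Real.log c1)) := by
      have hc : ContinuousAt (fun t : ℝ => Real.log (c1 + α*t)) 0 := by
        apply (Real.continuousAt_log (by simpa using ne_of_gt hc1pos)).comp
        fun_prop
      have := hc.tendsto.mono_left (nhdsWithin_le_nhds (s := Set.Ioi (0:ℝ)))
      simpa using this
    have hslope : Filter.Tendsto (fun t : ℝ => Real.sin t / t)
        (nhdsWithin 0 {(0:ℝ)}ᶜ) (nhds 1) := by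
      have h := Real.hasDerivAt_sin 0
      rw [hasDerivAt_iff_tendsto_slope] at h
      have heq : slope Real.sin 0 = fun t : ℝ => Real.sin t / t := by
        funext t; rw [slope_def_field]; simp
      rw [heq] at h
      simpa using h
    have T2 : Filter.Tendsto (fun t : ℝ => Real.log (Real.sin t) - Real.log t)
        (nhdsWithin 0 (Set.Ioi 0)) (nhds 0) := by
      have h1 : Filter.Tendsto (fun t : ℝ => Real.sin t / t)
          (nhdsWithin 0 (Set.Ioi 0)) (nhds 1) :=
        hslope.mono_left (nhdsWithin_mono 0 (fun x hx => ne_of_gt hx))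
      have h2 : Filter.Tendsto (fun t : ℝ => Real.log (Real.sin t / t))
          (nhdsWithin 0 (Set.Ioi 0)) (nhds 0) := by
        have := (Real.continuousAt_log one_ne_zero).tendsto.comp h1
        simpa [Function.comp_def] using this
      apply h2.congr'
      filter_upwards [Ioo_mem_nhdsGT_of_mem
        (Set.mem_Ico.mpr ⟨le_refl (0:ℝ), by linarith⟩ : (0:ℝ) ∈ Set.Ico 0 (π/2))] with t ht
      rw [Real.log_div (ne_of_gt (Real.sin_pos_of_pos_of_lt_pi ht.1 (by linarith [ht.2])))
        (ne_of_gt ht.1)]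
    have T3 : Filter.Tendsto (fun t : ℝ => Real.log (Real.cos (c2 - α*t)))
        (nhdsWithin 0 (Set.Ioi 0)) (nhds (Real.log (Real.cos c2))) := by
      have hc : ContinuousAt (fun t : ℝ => Real.log (Real.cos (c2 - α*t))) 0 := by
        apply (Real.continuousAt_log (by simpa using ne_of_gt hWpos)).comp
        fun_prop
      have := hc.tendsto.mono_left (nhdsWithin_le_nhds (s := Set.Ioi (0:ℝ)))
      simpa using this
    have hT := ((T1.add T2).const_mul α).sub T3
    have hT2 : Filter.Tendsto M (nhdsWithin 0 (Set.Ioi 0))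
        (nhds (α * (Real.log c1 + 0) - Real.log (Real.cos c2))) :=
      hT.congr (fun t => by simp only [hMdef]; ring)
    have hvv : α * Real.log c1 - Real.log (Real.cos c2)
        = α * (Real.log c1 + 0) - Real.log (Real.cos c2) := by ring
    rw [hvv]
    exact hT2
  have hkey : M t0 < α * Real.log c1 - Real.log (Real.cos c2) := by
    have h12 : M t0 < M (t0/2) := hanti (Set.mem_Ioc.mpr ⟨by linarith, by linarith⟩)
      (Set.mem_Ioc.mpr ⟨ht0pos, le_refl t0⟩) (by linarith)
    have h2C : M (t0/2) ≤ α * Real.log c1 - Real.log (Real.cos c2) := by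
      apply ge_of_tendsto hlim
      filter_upwards [Ioo_mem_nhdsGT_of_mem
        (Set.mem_Ico.mpr ⟨le_refl (0:ℝ), by linarith⟩ : (0:ℝ) ∈ Set.Ico 0 (t0/2))] with t ht
      exact (hanti (Set.mem_Ioc.mpr ⟨ht.1, by linarith [ht.2]⟩)
        (Set.mem_Ioc.mpr ⟨by linarith, by linarith⟩) ht.2).le
    exact lt_of_lt_of_le h12 h2C
  -- final algebra
  have hφ : π * (K - 1) / (2 * (K - α)) = π/2 - t0 := by
    rw [ht0def, hβdef]; field_simp; ring
  rw [hφ, Real.cos_pi_div_two_sub]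
  have hαφ : α * (π/2 - t0) = c2 - α * t0 := by rw [hc2def]; ring
  rw [hαφ]
  have hsinπ : Real.sin (α * π) = 2 * Real.sin c2 * Real.cos c2 := by
    rw [show α * π = 2 * c2 by rw [hc2def]; ring, Real.sin_two_mul]
  rw [hsinπ]
  have hsc2 : 0 < Real.sin c2 := Real.sin_pos_of_pos_of_lt_pi hc2pos (by linarith)
  have hsint0 : 0 < Real.sin t0 := Real.sin_pos_of_pos_of_lt_pi ht0pos (by linarith)
  have hY : 0 < Real.cos (c2 - α * t0) := by
    have hcosid : c2 - α*t0 = π/2 - (c1 + α*t0) := by rw [hc1def, hc2def, hβdef]; ring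
    rw [hcosid, Real.cos_pi_div_two_sub]
    obtain ⟨hu1, hu2, _⟩ := hubound t0 ht0pos le_rfl
    exact Real.sin_pos_of_pos_of_lt_pi hu1 (by linarith)
  have hK0 : (0:ℝ) < K := by linarith
  have hkt0 : c1 + α * t0 = K * t0 := by
    rw [hc1def, ht0def, hβdef]; field_simp; ring
  have hMt0 : M t0 = α * Real.log (K * Real.sin t0) - Real.log (Real.cos (c2 - α*t0)) := by
    simp only [hMdef]
    rw [hkt0, Real.log_mul (ne_of_gt hK0) (ne_of_gt ht0pos),
      Real.log_mul (ne_of_gt hK0) (ne_of_gt hsint0)]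
    ring
  rw [hMt0] at hkey
  have hXpos : 0 < K * Real.sin t0 := mul_pos hK0 hsint0
  have hstep : (K * Real.sin t0)^α / Real.cos (c2 - α*t0) < c1^α / Real.cos c2 := by
    rw [← Real.log_lt_log_iff (by positivity) (by positivity)]
    rw [Real.log_div (by positivity : (0:ℝ) < (K*Real.sin t0)^α).ne' (ne_of_gt hY),
      Real.log_div (by positivity : (0:ℝ) < c1^α).ne' (ne_of_gt hWpos),
      Real.log_rpow hXpos, Real.log_rpow hc1pos]
    linarith
  rw [div_lt_div_iff₀ hY (by positivity)]
  rw [div_lt_div_iff₀ hY hWpos] at hstep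
  have e1 : K^α * Real.sin t0 ^ α = (K * Real.sin t0)^α := (Real.mul_rpow hK0.le hsint0.le).symm
  have e2 : (β*π)^α = 2^α * c1^α := by
    rw [show β*π = 2*c1 by rw [hc1def]; ring, Real.mul_rpow (by norm_num : (0:ℝ) ≤ 2) hc1pos.le]
  have e3 : (2:ℝ)^(α-1) * 2 = 2^α := by
    rw [Real.rpow_sub (by norm_num : (0:ℝ) < 2), Real.rpow_one]; field_simp
  calc 2^(α-1) * K^α * Real.sin t0 ^ α * (2*Real.sin c2 * Real.cos c2)
      = (2^α * Real.sin c2) * ((K*Real.sin t0)^α * Real.cos c2) := by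
        rw [← e1, ← e3]; ring
    _ < (2^α * Real.sin c2) * (c1^α * Real.cos (c2 - α*t0)) :=
        mul_lt_mul_of_pos_left hstep (by positivity)
    _ = (β*π)^α * Real.sin c2 * Real.cos (c2 - α*t0) := by rw [e2]; ring
end

section
/- Let α ∈ (0,1), let k ≥ 2 be an integer, and let φ ∈ (0, π/2). Then α · sin(φ + απ/2 − αφ/k − φ/k) · sin(φ) ≤ k · sin(φ/k) · sin(απ/2 − αφ/k). -/
open Real

/-- For `α ∈ (0,1)`, integer `k ≥ 2` and `φ ∈ (0, π/2)`,
`α sin(φ + απ/2 − αφ/k − φ/k) sin(φ) ≤ k sin(φ/k) sin(απ/2 − αφ/k)`. -/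
theorem gl_key_derivative_inequality (α φ : ℝ) (hα : α ∈ Set.Ioo (0:ℝ) 1)
    (k : ℕ) (hk : 2 ≤ k) (hφ : φ ∈ Set.Ioo (0:ℝ) (π / 2)) :
    α * Real.sin (φ + α * π / 2 - α * φ / (k:ℝ) - φ / (k:ℝ)) * Real.sin φ ≤
      (k:ℝ) * Real.sin (φ / (k:ℝ)) * Real.sin (α * π / 2 - α * φ / (k:ℝ)) := by
  obtain ⟨hα0, hα1⟩ := hα
  obtain ⟨hφ0, hφ2⟩ := hφ
  have hπ := Real.pi_pos
  have hk2 : (2:ℝ) ≤ (k:ℝ) := by exact_mod_cast hk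
  have hkpos : (0:ℝ) < (k:ℝ) := by linarith
  have hψ0 : 0 < φ / (k:ℝ) := div_pos hφ0 hkpos
  have hψle : φ / (k:ℝ) ≤ φ / 2 := by
    apply div_le_div_of_nonneg_left (le_of_lt hφ0) (by norm_num) hk2
  have hψlt : φ / (k:ℝ) < π / 2 := by linarith
  have hcc := strictConcaveOn_sin_Icc.concaveOn
  have h0mem : (0:ℝ) ∈ Set.Icc 0 π := by constructor <;> linarith
  -- Step 1: α * cos(φ/k) ≤ sin (α*π/2 - α*φ/k)
  have hsmem : π/2 - φ/(k:ℝ) ∈ Set.Icc 0 π := by constructor <;> linarith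
  have key1 : α * Real.cos (φ / (k:ℝ)) ≤ Real.sin (α * π / 2 - α * φ / (k:ℝ)) := by
    have h := hcc.2 hsmem h0mem (le_of_lt hα0) (by linarith : (0:ℝ) ≤ 1 - α) (by ring)
    simp only [smul_eq_mul, mul_zero, Real.sin_zero, add_zero] at h
    have harg : α * (π/2 - φ/(k:ℝ)) = α * π / 2 - α * φ / (k:ℝ) := by ring
    rw [harg, Real.sin_pi_div_two_sub] at h
    exact h
  -- Step 2: sin φ ≤ k * sin(φ/k) * cos(φ/k)
  have hφmem : φ ∈ Set.Icc 0 π := by constructor <;> linarith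
  have key2 : Real.sin φ ≤ (k:ℝ) * Real.sin (φ / (k:ℝ)) * Real.cos (φ / (k:ℝ)) := by
    have ha : (0:ℝ) ≤ 2 / (k:ℝ) := by positivity
    have hb : (0:ℝ) ≤ 1 - 2 / (k:ℝ) := by
      have : 2 / (k:ℝ) ≤ 1 := by rw [div_le_one hkpos]; exact hk2
      linarith
    have h := hcc.2 hφmem h0mem ha hb (by ring)
    simp only [smul_eq_mul, mul_zero, Real.sin_zero, add_zero] at h
    have harg : 2 / (k:ℝ) * φ = 2 * (φ / (k:ℝ)) := by ring
    rw [harg, Real.sin_two_mul] at h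
    have h' : 2 * Real.sin φ ≤ (k:ℝ) * (2 * Real.sin (φ / (k:ℝ)) * Real.cos (φ / (k:ℝ))) := by
      rw [div_mul_eq_mul_div, div_le_iff₀ hkpos] at h
      linarith [h]
    nlinarith [h']
  -- Combine
  have hsinφ : 0 < Real.sin φ := Real.sin_pos_of_pos_of_lt_pi hφ0 (by linarith)
  have hsinψ : 0 < Real.sin (φ / (k:ℝ)) := Real.sin_pos_of_pos_of_lt_pi hψ0 (by linarith)
  have hX : Real.sin (φ + α * π / 2 - α * φ / (k:ℝ) - φ / (k:ℝ)) ≤ 1 :=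
    Real.sin_le_one _
  have hstep : α * Real.sin (φ + α * π / 2 - α * φ / (k:ℝ) - φ / (k:ℝ)) * Real.sin φ
      ≤ α * Real.sin φ := by
    nlinarith [mul_le_mul_of_nonneg_left hX (mul_pos hα0 hsinφ).le]
  calc α * Real.sin (φ + α * π / 2 - α * φ / (k:ℝ) - φ / (k:ℝ)) * Real.sin φ
      ≤ α * Real.sin φ := hstep
    _ ≤ α * ((k:ℝ) * Real.sin (φ / (k:ℝ)) * Real.cos (φ / (k:ℝ))) := by
        apply mul_le_mul_of_nonneg_left key2 (le_of_lt hα0)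
    _ = (k:ℝ) * Real.sin (φ / (k:ℝ)) * (α * Real.cos (φ / (k:ℝ))) := by ring
    _ ≤ (k:ℝ) * Real.sin (φ / (k:ℝ)) * Real.sin (α * π / 2 - α * φ / (k:ℝ)) := by
        apply mul_le_mul_of_nonneg_left key1
        positivity
end

section
/- Let α ∈ (0,1) and for θ ∈ (0, π) define a(θ) = 2^α · sin(θ/2)^α · sin(θ + α(π/2 − θ/2)) / sin(θ) and b(θ) = −2^α · sin(θ/2)^α · sin(α(π/2 − θ/2)) / sin(θ). Then a(θ) > |b(θ)| > 0 for every θ ∈ (0, π); in particular the curve (a(θ), b(θ)) never intersects the line a + b = 0. -/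
open Real

/-- For `α ∈ (0,1)` and `θ ∈ (0, π)`, the curve `Γ_0` for `k = 1`, given by
`a(θ) = 2^α sin(θ/2)^α sin(θ + α(π/2 − θ/2))/sin(θ)` and
`b(θ) = −2^α sin(θ/2)^α sin(α(π/2 − θ/2))/sin(θ)`, satisfies `a(θ) > |b(θ)| > 0`;
in particular it never intersects the line `a + b = 0`. -/
theorem gl_k1_curve_above_diagonal (α : ℝ) (hα : α ∈ Set.Ioo (0:ℝ) 1)
    (θ : ℝ) (hθ : θ ∈ Set.Ioo (0:ℝ) π) :
    2 ^ α * Real.sin (θ / 2) ^ α * Real.sin (θ + α * (π / 2 - θ / 2)) / Real.sin θ >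
        |(-(2 ^ α * Real.sin (θ / 2) ^ α * Real.sin (α * (π / 2 - θ / 2)) / Real.sin θ))| ∧
      |(-(2 ^ α * Real.sin (θ / 2) ^ α * Real.sin (α * (π / 2 - θ / 2)) / Real.sin θ))| > 0 := by
  obtain ⟨hα0, hα1⟩ := hα
  obtain ⟨hθ0, hθπ⟩ := hθ
  have hπ : (0:ℝ) < π := Real.pi_pos
  have hs2 : 0 < Real.sin (θ / 2) :=
    Real.sin_pos_of_pos_of_lt_pi (by linarith) (by linarith)
  have hs : 0 < Real.sin θ := Real.sin_pos_of_pos_of_lt_pi hθ0 hθπ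
  have h2 : (0:ℝ) < (2:ℝ) ^ α := Real.rpow_pos_of_pos (by norm_num) α
  have hsp : (0:ℝ) < Real.sin (θ / 2) ^ α := Real.rpow_pos_of_pos hs2 α
  set φ := α * (π / 2 - θ / 2) with hφdef
  have hφ0 : 0 < φ := mul_pos hα0 (by linarith)
  have hφlt : φ < π / 2 - θ / 2 := by
    have := mul_lt_of_lt_one_left (show (0:ℝ) < π / 2 - θ / 2 by linarith) hα1
    linarith
  have hsinφ : 0 < Real.sin φ :=
    Real.sin_pos_of_pos_of_lt_pi hφ0 (by linarith)
  have hcos : 0 < Real.cos (θ / 2 + φ) :=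
    Real.cos_pos_of_mem_Ioo ⟨by linarith, by linarith⟩
  have hdiff : Real.sin (θ + φ) - Real.sin φ = 2 * Real.sin (θ / 2) * Real.cos (θ / 2 + φ) := by
    rw [Real.sin_sub_sin]
    ring_nf
  have hsum : Real.sin φ < Real.sin (θ + φ) := by nlinarith
  have habs : |(-(2 ^ α * Real.sin (θ / 2) ^ α * Real.sin φ / Real.sin θ))| =
      2 ^ α * Real.sin (θ / 2) ^ α * Real.sin φ / Real.sin θ := by
    rw [abs_neg, abs_of_pos]
    positivity
  rw [habs]
  constructor
  · exact div_lt_div_of_pos_right ((mul_lt_mul_iff_right₀ (by positivity)).mpr hsum) hs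
  · positivity
end

section
/- Let α ∈ (0,1), let k ≥ 2 and m ≥ 1 be integers with 2m ≤ k, and let θ ∈ ((2m−1)π, 2mπ). Define a(θ) = (2k)^α · sin(θ/(2k))^α · sin(θ + α(π/2 − θ/(2k))) / sin(θ) and b(θ) = −(2k)^α · sin(θ/(2k))^α · sin(απ/2 − αθ/(2k)) / sin(θ). Then b(θ) > 0 and a(θ) + b(θ) > 0; in particular this portion of the boundary-locus curve lies strictly above the line a + b = 0. -/
open Real

/-- Let `α ∈ (0,1)`, `k ≥ 2` and `m ≥ 1` be integers with `2m ≤ k`, and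
`θ ∈ ((2m−1)π, 2mπ)`. For
`a(θ) = (2k)^α sin(θ/(2k))^α sin(θ + α(π/2 − θ/(2k)))/sin(θ)` and
`b(θ) = −(2k)^α sin(θ/(2k))^α sin(απ/2 − αθ/(2k))/sin(θ)`, one has `b(θ) > 0`
and `a(θ) + b(θ) > 0`: this portion of the boundary locus lies strictly above
the line `a + b = 0`. -/
theorem gl_even_arcs_above_diagonal (α : ℝ) (hα : α ∈ Set.Ioo (0:ℝ) 1)
    (k m : ℕ) (hk : 2 ≤ k) (hm : 1 ≤ m) (h2m : 2 * m ≤ k)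
    (θ : ℝ) (hθ : θ ∈ Set.Ioo ((2 * (m:ℝ) - 1) * π) (2 * (m:ℝ) * π)) :
    0 < -((2 * (k:ℝ)) ^ α * Real.sin (θ / (2 * (k:ℝ))) ^ α *
        Real.sin (α * π / 2 - α * θ / (2 * (k:ℝ))) / Real.sin θ) ∧
      0 < (2 * (k:ℝ)) ^ α * Real.sin (θ / (2 * (k:ℝ))) ^ α *
          Real.sin (θ + α * (π / 2 - θ / (2 * (k:ℝ)))) / Real.sin θ +
        -((2 * (k:ℝ)) ^ α * Real.sin (θ / (2 * (k:ℝ))) ^ α *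
          Real.sin (α * π / 2 - α * θ / (2 * (k:ℝ))) / Real.sin θ) := by
  obtain ⟨hα0, hα1⟩ := hα
  obtain ⟨hθ1, hθ2⟩ := hθ
  have hπ := Real.pi_pos
  have hkR : (2:ℝ) ≤ (k:ℝ) := by exact_mod_cast hk
  have hmR : (1:ℝ) ≤ (m:ℝ) := by exact_mod_cast hm
  have h2mR : 2 * (m:ℝ) ≤ (k:ℝ) := by exact_mod_cast h2m
  have hk0 : (0:ℝ) < 2 * (k:ℝ) := by linarith
  have hθpos : 0 < θ := by nlinarith
  have hx0 : 0 < θ / (2 * (k:ℝ)) := div_pos hθpos hk0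
  have hx1 : θ / (2 * (k:ℝ)) < π / 2 := by
    rw [div_lt_iff₀ hk0]; nlinarith
  have hsx : 0 < Real.sin (θ / (2 * (k:ℝ))) :=
    Real.sin_pos_of_pos_of_lt_pi hx0 (by linarith)
  have hC : 0 < (2 * (k:ℝ)) ^ α * Real.sin (θ / (2 * (k:ℝ))) ^ α := by positivity
  have hψ0 : 0 < 2 * (m:ℝ) * π - θ := by linarith
  have hψπ : 2 * (m:ℝ) * π - θ < π := by nlinarith
  have hsψ : 0 < Real.sin (2 * (m:ℝ) * π - θ) :=
    Real.sin_pos_of_pos_of_lt_pi hψ0 (by linarith)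
  have hsinθ : Real.sin θ = -Real.sin (2 * (m:ℝ) * π - θ) := by
    have h : θ = -(2 * (m:ℝ) * π - θ) + (m:ℤ) * (2 * π) := by push_cast; ring
    conv_lhs => rw [h]
    rw [Real.sin_add_int_mul_two_pi, Real.sin_neg]
  have hsinθneg : Real.sin θ < 0 := by rw [hsinθ]; linarith
  set φ := α * (π / 2 - θ / (2 * (k:ℝ))) with hφdef
  have hφ0 : 0 < φ := mul_pos hα0 (by linarith)
  have hφlt : φ < π / 2 := by
    have h1 : π / 2 - θ / (2 * (k:ℝ)) < π / 2 := by linarith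
    nlinarith
  have harg : α * π / 2 - α * θ / (2 * (k:ℝ)) = φ := by rw [hφdef]; ring
  have hsφ : 0 < Real.sin φ := Real.sin_pos_of_pos_of_lt_pi hφ0 (by linarith)
  have e1 : Real.sin (θ + φ) = Real.sin (φ - (2 * (m:ℝ) * π - θ)) := by
    have h : θ + φ = (φ - (2 * (m:ℝ) * π - θ)) + (m:ℤ) * (2 * π) := by
      push_cast; ring
    rw [h, Real.sin_add_int_mul_two_pi]
  have key : Real.sin (φ - (2 * (m:ℝ) * π - θ)) < Real.sin φ := by
    rcases le_or_gt (φ - (2 * (m:ℝ) * π - θ)) 0 with h | h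
    · have := Real.sin_nonpos_of_nonpos_of_neg_pi_le h (by linarith)
      linarith
    · exact Real.strictMonoOn_sin ⟨by linarith, by linarith⟩
        ⟨by linarith, le_of_lt hφlt⟩ (by linarith)
  constructor
  · rw [harg, hsinθ, div_neg, neg_neg]
    exact div_pos (mul_pos hC hsφ) hsψ
  · rw [harg, e1]
    have heq : (2 * (k:ℝ)) ^ α * Real.sin (θ / (2 * (k:ℝ))) ^ α *
          Real.sin (φ - (2 * (m:ℝ) * π - θ)) / Real.sin θ +
        -((2 * (k:ℝ)) ^ α * Real.sin (θ / (2 * (k:ℝ))) ^ α *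
          Real.sin φ / Real.sin θ) =
        (2 * (k:ℝ)) ^ α * Real.sin (θ / (2 * (k:ℝ))) ^ α *
          (Real.sin φ - Real.sin (φ - (2 * (m:ℝ) * π - θ))) /
          Real.sin (2 * (m:ℝ) * π - θ) := by
      rw [hsinθ, div_neg, div_neg, neg_neg, mul_sub]; ring
    rw [heq]
    exact div_pos (mul_pos hC (by linarith)) hsψ
end
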